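/- arXiv:2103.06481 — 2 statements merged into one kernel-verified Lean document; each statement's English description precedes it below -/
import Mathlib

section
/- There exists S such that for all integers s ≥ S, setting n = 3s − 1, the vector (t₀*, …, t_{2n}*) defined by t_i* = 1 for 0 ≤ i ≤ 2s − 4, t_{2s−3}* = 4/5, t_{2s−2}* = 3/5, t_{2s−1}* = 2/5, t_{2s}* = 1/5, and t_i* = 0 for i ≥ 2s + 1, is an optimal solution of the cap set linear program: it is feasible, and every feasible vector (t₀, …, t_{2n}) satisfies 3·∑_{i=0}^{2n} f_{n,i}·t_i ≥ 3·∑_{i=0}^{2n} f_{n,i}·t_i*. -/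
/-- `f_{n,i}`: the coefficient of `x^i` in `(1 + x + x²)^n`. -/
noncomputable def coeff3 (n i : ℕ) : ℕ :=
  (((1 + Polynomial.X + Polynomial.X ^ 2 : Polynomial ℕ)) ^ n).coeff i

/-- A vector `(t₀, …, t_{2n})` (given as a function on `ℕ`) is feasible for the
cap set linear program if all its entries are nonnegative and
`t_i + t_j + t_k ≥ 1` whenever `i + j + k ≤ 2n`. -/
def LPFeasible (n : ℕ) (t : ℕ → ℝ) : Prop :=
  (∀ i, i ≤ 2 * n → 0 ≤ t i) ∧
  (∀ i j k : ℕ, i + j + k ≤ 2 * n → 1 ≤ t i + t j + t k)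

/-- The objective value `3 ∑_{i=0}^{2n} f_{n,i} t_i` of the cap set linear program. -/
noncomputable def LPObj (n : ℕ) (t : ℕ → ℝ) : ℝ :=
  3 * ∑ i ∈ Finset.range (2 * n + 1), (coeff3 n i : ℝ) * t i

namespace CapLP
open Polynomial Finset

private lemma coeff_mul_P (Q : Polynomial ℕ) (k : ℕ) :
    ((1 + X + X ^ 2 : Polynomial ℕ) * Q).coeff (k + 2)
      = Q.coeff (k + 2) + Q.coeff (k + 1) + Q.coeff k := by
  have h2 : (X ^ 2 * Q : Polynomial ℕ).coeff (k + 2) = Q.coeff k := by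
    rw [sq, mul_assoc, coeff_X_mul, coeff_X_mul]
  rw [add_mul, add_mul, one_mul, coeff_add, coeff_add, coeff_X_mul, h2]

private lemma coeff_mul_P1 (Q : Polynomial ℕ) :
    ((1 + X + X ^ 2 : Polynomial ℕ) * Q).coeff 1 = Q.coeff 1 + Q.coeff 0 := by
  have h2 : (X ^ 2 * Q : Polynomial ℕ).coeff 1 = 0 := by
    rw [sq, mul_assoc, show (1:ℕ) = 0 + 1 from rfl, coeff_X_mul, coeff_X_mul_zero]
  rw [add_mul, add_mul, one_mul, coeff_add, coeff_add,
    show (1:ℕ) = 0 + 1 from rfl, coeff_X_mul, h2, add_zero]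

lemma coeff3_zero (n : ℕ) : coeff3 n 0 = 1 := by
  unfold coeff3
  rw [coeff_zero_eq_eval_zero]
  simp

lemma coeff3_one (n : ℕ) : coeff3 n 1 = n := by
  induction n with
  | zero => simp [coeff3, Polynomial.coeff_one]
  | succ m ih =>
      have h : coeff3 (m+1) 1 = coeff3 m 1 + coeff3 m 0 := by
        unfold coeff3
        rw [pow_succ, mul_comm, coeff_mul_P1]
      rw [h, ih, coeff3_zero]

lemma coeff3_succ_n (n k : ℕ) :
    coeff3 (n+1) (k+2) = coeff3 n (k+2) + coeff3 n (k+1) + coeff3 n k := by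
  unfold coeff3
  rw [pow_succ, mul_comm, coeff_mul_P]

lemma coeff3_rec (n j : ℕ) :
    (j + 2) * coeff3 n (j + 2) + (j + 1) * coeff3 n (j + 1) + j * coeff3 n j
      = n * coeff3 n (j + 1) + 2 * n * coeff3 n j := by
  rcases n with _ | m
  · -- n = 0 : coeff3 0 i = (1).coeff i
    have h : ∀ i, coeff3 0 i = if i = 0 then 1 else 0 := by
      intro i; unfold coeff3; rw [pow_zero, coeff_one]
    simp [h]
  · have hdP : derivative (1 + X + X ^ 2 : Polynomial ℕ) = 1 + C 2 * X := by
      rw [derivative_add, derivative_add, derivative_one, derivative_X, derivative_X_pow]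
      norm_num
    have key : (1 + X + X ^ 2 : Polynomial ℕ) * derivative ((1 + X + X ^ 2) ^ (m+1))
        = C ((m:ℕ) + 1) * ((1 + C 2 * X) * (1 + X + X ^ 2) ^ (m+1)) := by
      rw [derivative_pow_succ, hdP, pow_succ]
      simp only [Nat.cast_id]
      ring
    -- take coefficients
    have hcoeff : ∀ t : ℕ,
        ((1 + X + X ^ 2 : Polynomial ℕ) * derivative ((1 + X + X ^ 2) ^ (m+1))).coeff t
          = ((m:ℕ) + 1) * (((1 + X + X ^ 2 : Polynomial ℕ) ^ (m+1)).coeff t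
              + 2 * (X * (1 + X + X ^ 2 : Polynomial ℕ) ^ (m+1)).coeff t) := by
      intro t
      have hexp : ((1 + C 2 * X) * (1 + X + X ^ 2 : Polynomial ℕ) ^ (m+1)).coeff t
          = ((1 + X + X ^ 2 : Polynomial ℕ) ^ (m+1)).coeff t
            + 2 * (X * (1 + X + X ^ 2 : Polynomial ℕ) ^ (m+1)).coeff t := by
        rw [add_mul, one_mul, coeff_add, mul_assoc, coeff_C_mul]
      rw [key, coeff_C_mul, hexp]
    have hD : ∀ t : ℕ, (derivative ((1 + X + X ^ 2 : Polynomial ℕ) ^ (m+1))).coeff t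
        = coeff3 (m+1) (t+1) * (t+1) := fun t => coeff_derivative _ t
    rcases j with _ | j'
    · have h1 := hcoeff 1
      rw [coeff_mul_P1, hD, hD] at h1
      have hx : (X * (1 + X + X ^ 2 : Polynomial ℕ) ^ (m+1)).coeff 1
          = coeff3 (m+1) 0 := by
        rw [show (1:ℕ) = 0 + 1 from rfl, coeff_X_mul]; rfl
      rw [hx] at h1
      have h2 : (((1 + X + X ^ 2 : Polynomial ℕ) ^ (m+1)).coeff 1) = coeff3 (m+1) 1 := rfl
      rw [h2] at h1
      zify at h1 ⊢
      linear_combination h1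
    · have h1 := hcoeff (j' + 2)
      rw [coeff_mul_P, hD, hD, hD] at h1
      have hx : (X * (1 + X + X ^ 2 : Polynomial ℕ) ^ (m+1)).coeff (j' + 2)
          = coeff3 (m+1) (j'+1) := by
        rw [show j' + 2 = (j' + 1) + 1 from rfl, coeff_X_mul]; rfl
      rw [hx] at h1
      have h2 : (((1 + X + X ^ 2 : Polynomial ℕ) ^ (m+1)).coeff (j'+2)) = coeff3 (m+1) (j'+2) := rfl
      rw [h2] at h1
      zify at h1 ⊢
      linear_combination h1


noncomputable def G (s : ℕ) : ℕ → ℝ := fun i => (coeff3 (3 * s - 1) i : ℝ)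

lemma G_nonneg (s i : ℕ) : 0 ≤ G s i := Nat.cast_nonneg _

lemma recR (s : ℕ) (hs : 1 ≤ s) (j : ℕ) :
    ((j : ℝ) + 2) * G s (j + 2) + ((j : ℝ) + 1) * G s (j + 1) + (j : ℝ) * G s j
      = (3 * (s : ℝ) - 1) * G s (j + 1) + 2 * (3 * (s : ℝ) - 1) * G s j := by
  have h := coeff3_rec (3 * s - 1) j
  have hcast : ((3 * s - 1 : ℕ) : ℝ) = 3 * (s : ℝ) - 1 := by
    have : 1 ≤ 3 * s := by omega
    push_cast [this]
    ring
  have h' : ((j + 2 : ℕ) : ℝ) * G s (j + 2) + ((j + 1 : ℕ) : ℝ) * G s (j + 1)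
      + (j : ℝ) * G s j
      = ((3 * s - 1 : ℕ) : ℝ) * G s (j + 1) + 2 * ((3 * s - 1 : ℕ) : ℝ) * G s j := by
    unfold G
    exact_mod_cast congrArg (fun x : ℕ => (x : ℝ)) h
  push_cast at h'
  rw [hcast] at h'
  linarith [h']

/-- from an upper bound `q * G(k+1) ≤ p * G k` (i.e. ratio ≤ p/q ... ) derive a
lower bound `a * G(k+1) ≤ b * G(k+2)`. -/
lemma low_step {s k : ℕ} (hs : 1 ≤ s) {p q a b : ℝ}
    (hp : 0 < p) (hb : 0 < b)
    (hk : (k : ℝ) ≤ 6 * (s : ℝ) - 2)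
    (hup : q * G s (k + 1) ≤ p * G s k)
    (hscl : a * p * ((k : ℝ) + 2)
      ≤ b * p * (3 * (s : ℝ) - 2 - k) + b * q * (6 * (s : ℝ) - 2 - k)) :
    a * G s (k + 1) ≤ b * G s (k + 2) := by
  have hrec := recR s hs k
  have hG1 : 0 ≤ G s (k + 1) := G_nonneg s _
  have key : 0 ≤ (6 * (s : ℝ) - 2 - k) * (p * G s k - q * G s (k + 1)) :=
    mul_nonneg (by linarith) (by linarith)
  have key2 : 0 ≤ b * ((6 * (s : ℝ) - 2 - k) * (p * G s k - q * G s (k + 1))) :=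
    mul_nonneg hb.le key
  have key3 : 0 ≤ (b * p * (3 * (s : ℝ) - 2 - k) + b * q * (6 * (s : ℝ) - 2 - k)
      - a * p * ((k : ℝ) + 2)) * G s (k + 1) := mul_nonneg (by linarith) hG1
  have e2 : b * p * (((k : ℝ) + 2) * G s (k + 2))
      = b * p * ((3 * (s : ℝ) - 2 - k) * G s (k + 1) + (6 * (s : ℝ) - 2 - k) * G s k) := by
    linear_combination (b * p) * hrec
  have main : (p * ((k : ℝ) + 2)) * (a * G s (k + 1)) ≤ (p * ((k : ℝ) + 2)) * (b * G s (k + 2)) := by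
    nlinarith [key2, key3, e2]
  exact le_of_mul_le_mul_left main (by positivity)

/-- from a lower bound `p * G k ≤ q * G(k+1)` derive an upper bound
`c * G(k+2) ≤ d * G(k+1)`. -/
lemma up_step {s k : ℕ} (hs : 1 ≤ s) {p q c d : ℝ}
    (hp : 0 < p) (hc : 0 < c)
    (hk : (k : ℝ) ≤ 6 * (s : ℝ) - 2)
    (hlow : p * G s k ≤ q * G s (k + 1))
    (hscl : c * p * (3 * (s : ℝ) - 2 - k) + c * q * (6 * (s : ℝ) - 2 - k)
      ≤ d * p * ((k : ℝ) + 2)) :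
    c * G s (k + 2) ≤ d * G s (k + 1) := by
  have hrec := recR s hs k
  have hG1 : 0 ≤ G s (k + 1) := G_nonneg s _
  have key : 0 ≤ (6 * (s : ℝ) - 2 - k) * (q * G s (k + 1) - p * G s k) :=
    mul_nonneg (by linarith) (by linarith)
  have key2 : 0 ≤ c * ((6 * (s : ℝ) - 2 - k) * (q * G s (k + 1) - p * G s k)) :=
    mul_nonneg hc.le key
  have key3 : 0 ≤ (d * p * ((k : ℝ) + 2)
      - (c * p * (3 * (s : ℝ) - 2 - k) + c * q * (6 * (s : ℝ) - 2 - k))) * G s (k + 1) :=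
    mul_nonneg (by linarith) hG1
  have e2 : c * p * (((k : ℝ) + 2) * G s (k + 2))
      = c * p * ((3 * (s : ℝ) - 2 - k) * G s (k + 1) + (6 * (s : ℝ) - 2 - k) * G s k) := by
    linear_combination (c * p) * hrec
  have main : (p * ((k : ℝ) + 2)) * (c * G s (k + 2)) ≤ (p * ((k : ℝ) + 2)) * (d * G s (k + 1)) := by
    nlinarith [key2, key3, e2]
  exact le_of_mul_le_mul_left main (by positivity)


lemma G_zero (s : ℕ) : G s 0 = 1 := by unfold G; rw [coeff3_zero]; norm_num

lemma G_one (s : ℕ) (hs : 1 ≤ s) : G s 1 = 3 * (s:ℝ) - 1 := by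
  unfold G; rw [coeff3_one]
  push_cast [Nat.cast_sub (by omega : 1 ≤ 3 * s)]
  ring

/-- crude lower bound `r_{k+1} ≥ (3s-1-k)/(k+1)`. -/
lemma low0 (s : ℕ) (hs : 1 ≤ s) (k : ℕ) (hk : (k:ℝ) ≤ 6 * (s:ℝ) - 2) :
    (3 * (s:ℝ) - 1 - k) * G s k ≤ ((k:ℝ) + 1) * G s (k + 1) := by
  rcases k with _ | j
  · rw [G_zero, G_one s hs]; norm_num
  · have hrec := recR s hs j
    have hGj : 0 ≤ G s j := G_nonneg s j
    have hjR : (j:ℝ) ≤ 6 * (s:ℝ) - 2 := by push_cast at hk; linarith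
    have key : 0 ≤ (6 * (s:ℝ) - 2 - j) * G s j := mul_nonneg (by linarith) hGj
    push_cast
    linarith [hrec, key]

/-- ratio ≥ 3/2 in the initial region. -/
lemma r32a (s : ℕ) (hs : 1 ≤ s) (k : ℕ) (hk : 5 * k + 5 ≤ 6 * s) :
    3 * G s k ≤ 2 * G s (k + 1) := by
  have hkR : 5 * (k:ℝ) + 5 ≤ 6 * (s:ℝ) := by exact_mod_cast hk
  have h0 := low0 s hs k (by linarith)
  have hGk : 0 ≤ G s k := G_nonneg s k
  have key : 0 ≤ (2 * (3 * (s:ℝ) - 1 - k) - 3 * ((k:ℝ) + 1)) * G s k :=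
    mul_nonneg (by linarith) hGk
  have main : (((k:ℝ) + 1)) * (3 * G s k) ≤ (((k:ℝ) + 1)) * (2 * G s (k + 1)) := by
    nlinarith [h0, key]
  exact le_of_mul_le_mul_left main (by positivity)

lemma block1 (s : ℕ) (hs : 100000 ≤ s) : ∀ k : ℕ, 6 * s ≤ 5 * k + 10 → 5 * k ≤ 8 * s →
    3 * G s k ≤ 2 * G s (k + 1) ∧ 4 * G s (k + 1) ≤ 17 * G s k := by
  have hs1 : 1 ≤ s := by omega
  have hsR : (100000 : ℝ) ≤ (s : ℝ) := by exact_mod_cast hs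
  intro k
  induction k using Nat.strong_induction_on with
  | _ k ih =>
    intro h1 h2
    have hk1 : 1 ≤ k := by omega
    obtain ⟨j, rfl⟩ : ∃ j, k = j + 1 := ⟨k - 1, by omega⟩
    have hjR : ((j:ℝ)) ≤ 6 * (s:ℝ) - 2 := by
      have hy : (j : ℕ) + 2 ≤ 6 * s := by omega
      have hy2 : ((j:ℝ)) + 2 ≤ 6 * (s:ℝ) := by exact_mod_cast hy
      linarith
    have h1R : (6 * (s:ℝ) ≤ 5 * ((j:ℝ) + 1) + 10) := by exact_mod_cast h1
    have h2R : (5 * ((j:ℝ) + 1) ≤ 8 * (s:ℝ)) := by exact_mod_cast h2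
    by_cases hc : 6 * s ≤ 5 * j + 10
    · obtain ⟨hl, hu⟩ := ih j (by omega) hc (by omega)
      exact ⟨low_step hs1 (by norm_num : (0:ℝ) < 17) (by norm_num : (0:ℝ) < 2) (by first | linarith | (push_cast at *; linarith)) hu (by first | linarith | (push_cast at *; linarith)),
        up_step hs1 (by norm_num : (0:ℝ) < 3) (by norm_num : (0:ℝ) < 4) (by first | linarith | (push_cast at *; linarith)) hl (by first | linarith | (push_cast at *; linarith))⟩
    · -- base: use crude bound r32a
      have hcR : 5 * ((j:ℝ)) + 10 + 1 ≤ 6 * (s:ℝ) := by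
        exact_mod_cast (by omega : 5 * j + 10 + 1 ≤ 6 * s)
      have hl : 3 * G s j ≤ 2 * G s (j + 1) := r32a s hs1 j (by omega)
      refine ⟨?_, up_step hs1 (by norm_num : (0:ℝ) < 3) (by norm_num : (0:ℝ) < 4) (by first | linarith | (push_cast at *; linarith)) hl (by first | linarith | (push_cast at *; linarith))⟩
      obtain ⟨i, rfl⟩ : ∃ i, j = i + 1 := ⟨j - 1, by omega⟩
      have hiR : ((i:ℝ)) ≤ 6 * (s:ℝ) - 2 := by push_cast at hjR ⊢; linarith
      have hui : 2 * G s (i + 1) ≤ 3 * G s i → True := fun _ => trivial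
      -- lower at k from up at j: we need an upper bound at j; derive from r32a at i
      have hli : 3 * G s i ≤ 2 * G s (i + 1) := r32a s hs1 i (by omega)
      have huj : 4 * G s (i + 1 + 1) ≤ 17 * G s (i + 1) :=
        up_step hs1 (by norm_num : (0:ℝ) < 3) (by norm_num : (0:ℝ) < 4) (by first | linarith | (push_cast at *; linarith)) hli (by first | linarith | (push_cast at *; linarith))
      exact low_step hs1 (by norm_num : (0:ℝ) < 17) (by norm_num : (0:ℝ) < 2) (by first | linarith | (push_cast at *; linarith)) huj (by first | linarith | (push_cast at *; linarith))

lemma block2 (s : ℕ) (hs : 100000 ≤ s) : ∀ k : ℕ, 8 * s ≤ 5 * k → 5 * k ≤ 9 * s →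
    151 * G s k ≤ 100 * G s (k + 1) ∧ 4 * G s (k + 1) ≤ 11 * G s k := by
  have hs1 : 1 ≤ s := by omega
  have hsR : (100000 : ℝ) ≤ (s : ℝ) := by exact_mod_cast hs
  intro k
  induction k using Nat.strong_induction_on with
  | _ k ih =>
    intro h1 h2
    have hk1 : 1 ≤ k := by omega
    obtain ⟨j, rfl⟩ : ∃ j, k = j + 1 := ⟨k - 1, by omega⟩
    have hjR : ((j:ℝ)) ≤ 6 * (s:ℝ) - 2 := by
      have hy : (j : ℕ) + 2 ≤ 6 * s := by omega
      have hy2 : ((j:ℝ)) + 2 ≤ 6 * (s:ℝ) := by exact_mod_cast hy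
      linarith
    have h1R : (8 * (s:ℝ) ≤ 5 * ((j:ℝ) + 1)) := by exact_mod_cast h1
    have h2R : (5 * ((j:ℝ) + 1) ≤ 9 * (s:ℝ)) := by exact_mod_cast h2
    by_cases hc : 8 * s ≤ 5 * j
    · obtain ⟨hl, hu⟩ := ih j (by omega) hc (by omega)
      exact ⟨low_step hs1 (by norm_num : (0:ℝ) < 11) (by norm_num : (0:ℝ) < 100) (by first | linarith | (push_cast at *; linarith)) hu (by first | linarith | (push_cast at *; linarith)),
        up_step hs1 (by norm_num : (0:ℝ) < 151) (by norm_num : (0:ℝ) < 4) (by first | linarith | (push_cast at *; linarith)) hl (by first | linarith | (push_cast at *; linarith))⟩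
    · have hcR : 5 * ((j:ℝ)) + 1 ≤ 8 * (s:ℝ) := by
        exact_mod_cast (by omega : 5 * j + 1 ≤ 8 * s)
      obtain ⟨hl, hu⟩ := block1 s hs j (by omega) (by omega)
      exact ⟨low_step hs1 (by norm_num : (0:ℝ) < 17) (by norm_num : (0:ℝ) < 100) (by first | linarith | (push_cast at *; linarith)) hu (by first | linarith | (push_cast at *; linarith)),
        up_step hs1 (by norm_num : (0:ℝ) < 3) (by norm_num : (0:ℝ) < 4) (by first | linarith | (push_cast at *; linarith)) hl (by first | linarith | (push_cast at *; linarith))⟩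

lemma block3 (s : ℕ) (hs : 100000 ≤ s) : ∀ k : ℕ, 9 * s ≤ 5 * k → 100 * k ≤ 191 * s →
    757 * G s k ≤ 500 * G s (k + 1) ∧ 100 * G s (k + 1) ≤ 223 * G s k := by
  have hs1 : 1 ≤ s := by omega
  have hsR : (100000 : ℝ) ≤ (s : ℝ) := by exact_mod_cast hs
  intro k
  induction k using Nat.strong_induction_on with
  | _ k ih =>
    intro h1 h2
    have hk1 : 1 ≤ k := by omega
    obtain ⟨j, rfl⟩ : ∃ j, k = j + 1 := ⟨k - 1, by omega⟩
    have hjR : ((j:ℝ)) ≤ 6 * (s:ℝ) - 2 := by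
      have hy : (j : ℕ) + 2 ≤ 6 * s := by omega
      have hy2 : ((j:ℝ)) + 2 ≤ 6 * (s:ℝ) := by exact_mod_cast hy
      linarith
    have h1R : (9 * (s:ℝ) ≤ 5 * ((j:ℝ) + 1)) := by exact_mod_cast h1
    have h2R : (100 * ((j:ℝ) + 1) ≤ 191 * (s:ℝ)) := by exact_mod_cast h2
    by_cases hc : 9 * s ≤ 5 * j
    · obtain ⟨hl, hu⟩ := ih j (by omega) hc (by omega)
      exact ⟨low_step hs1 (by norm_num : (0:ℝ) < 223) (by norm_num : (0:ℝ) < 500) (by first | linarith | (push_cast at *; linarith)) hu (by first | linarith | (push_cast at *; linarith)),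
        up_step hs1 (by norm_num : (0:ℝ) < 757) (by norm_num : (0:ℝ) < 100) (by first | linarith | (push_cast at *; linarith)) hl (by first | linarith | (push_cast at *; linarith))⟩
    · have hcR : 5 * ((j:ℝ)) + 1 ≤ 9 * (s:ℝ) := by
        exact_mod_cast (by omega : 5 * j + 1 ≤ 9 * s)
      obtain ⟨hl, hu⟩ := block2 s hs j (by omega) (by omega)
      exact ⟨low_step hs1 (by norm_num : (0:ℝ) < 11) (by norm_num : (0:ℝ) < 500) (by first | linarith | (push_cast at *; linarith)) hu (by first | linarith | (push_cast at *; linarith)),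
        up_step hs1 (by norm_num : (0:ℝ) < 151) (by norm_num : (0:ℝ) < 100) (by first | linarith | (push_cast at *; linarith)) hl (by first | linarith | (push_cast at *; linarith))⟩

lemma block4a (s : ℕ) (hs : 100000 ≤ s) : ∀ k : ℕ, 191 * s ≤ 100 * k → 20 * k ≤ 39 * s →
    301 * G s k ≤ 200 * G s (k + 1) ∧ 1 * G s (k + 1) ≤ 2 * G s k := by
  have hs1 : 1 ≤ s := by omega
  have hsR : (100000 : ℝ) ≤ (s : ℝ) := by exact_mod_cast hs
  intro k
  induction k using Nat.strong_induction_on with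
  | _ k ih =>
    intro h1 h2
    have hk1 : 1 ≤ k := by omega
    obtain ⟨j, rfl⟩ : ∃ j, k = j + 1 := ⟨k - 1, by omega⟩
    have hjR : ((j:ℝ)) ≤ 6 * (s:ℝ) - 2 := by
      have hy : (j : ℕ) + 2 ≤ 6 * s := by omega
      have hy2 : ((j:ℝ)) + 2 ≤ 6 * (s:ℝ) := by exact_mod_cast hy
      linarith
    have h1R : (191 * (s:ℝ) ≤ 100 * ((j:ℝ) + 1)) := by exact_mod_cast h1
    have h2R : (20 * ((j:ℝ) + 1) ≤ 39 * (s:ℝ)) := by exact_mod_cast h2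
    by_cases hc : 191 * s ≤ 100 * j
    · obtain ⟨hl, hu⟩ := ih j (by omega) hc (by omega)
      exact ⟨low_step hs1 (by norm_num : (0:ℝ) < 2) (by norm_num : (0:ℝ) < 200) (by first | linarith | (push_cast at *; linarith)) hu (by first | linarith | (push_cast at *; linarith)),
        up_step hs1 (by norm_num : (0:ℝ) < 301) (by norm_num : (0:ℝ) < 1) (by first | linarith | (push_cast at *; linarith)) hl (by first | linarith | (push_cast at *; linarith))⟩
    · have hcR : 100 * ((j:ℝ)) + 1 ≤ 191 * (s:ℝ) := by
        exact_mod_cast (by omega : 100 * j + 1 ≤ 191 * s)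
      obtain ⟨hl, hu⟩ := block3 s hs j (by omega) (by omega)
      exact ⟨low_step hs1 (by norm_num : (0:ℝ) < 223) (by norm_num : (0:ℝ) < 200) (by first | linarith | (push_cast at *; linarith)) hu (by first | linarith | (push_cast at *; linarith)),
        up_step hs1 (by norm_num : (0:ℝ) < 757) (by norm_num : (0:ℝ) < 1) (by first | linarith | (push_cast at *; linarith)) hl (by first | linarith | (push_cast at *; linarith))⟩

lemma block4b (s : ℕ) (hs : 100000 ≤ s) : ∀ k : ℕ, 39 * s ≤ 20 * k → k + 15 ≤ 2 * s →
    301 * G s k ≤ 200 * G s (k + 1) ∧ 100 * G s (k + 1) ≤ 199 * G s k := by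
  have hs1 : 1 ≤ s := by omega
  have hsR : (100000 : ℝ) ≤ (s : ℝ) := by exact_mod_cast hs
  intro k
  induction k using Nat.strong_induction_on with
  | _ k ih =>
    intro h1 h2
    have hk1 : 1 ≤ k := by omega
    obtain ⟨j, rfl⟩ : ∃ j, k = j + 1 := ⟨k - 1, by omega⟩
    have hjR : ((j:ℝ)) ≤ 6 * (s:ℝ) - 2 := by
      have hy : (j : ℕ) + 2 ≤ 6 * s := by omega
      have hy2 : ((j:ℝ)) + 2 ≤ 6 * (s:ℝ) := by exact_mod_cast hy
      linarith
    have h1R : (39 * (s:ℝ) ≤ 20 * ((j:ℝ) + 1)) := by exact_mod_cast h1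
    have h2R : (((j:ℝ) + 1) + 15 ≤ 2 * (s:ℝ)) := by exact_mod_cast h2
    by_cases hc : 39 * s ≤ 20 * j
    · obtain ⟨hl, hu⟩ := ih j (by omega) hc (by omega)
      exact ⟨low_step hs1 (by norm_num : (0:ℝ) < 199) (by norm_num : (0:ℝ) < 200) (by first | linarith | (push_cast at *; linarith)) hu (by first | linarith | (push_cast at *; linarith)),
        up_step hs1 (by norm_num : (0:ℝ) < 301) (by norm_num : (0:ℝ) < 100) (by first | linarith | (push_cast at *; linarith)) hl (by first | linarith | (push_cast at *; linarith))⟩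
    · have hcR : 20 * ((j:ℝ)) + 1 ≤ 39 * (s:ℝ) := by
        exact_mod_cast (by omega : 20 * j + 1 ≤ 39 * s)
      obtain ⟨hl, hu⟩ := block4a s hs j (by omega) (by omega)
      exact ⟨low_step hs1 (by norm_num : (0:ℝ) < 2) (by norm_num : (0:ℝ) < 200) (by first | linarith | (push_cast at *; linarith)) hu (by first | linarith | (push_cast at *; linarith)),
        up_step hs1 (by norm_num : (0:ℝ) < 301) (by norm_num : (0:ℝ) < 100) (by first | linarith | (push_cast at *; linarith)) hl (by first | linarith | (push_cast at *; linarith))⟩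

lemma chainC2 (s : ℕ) (hs : 100000 ≤ s) :
    3 * G s (2 * s - 14) ≤ 2 * G s (2 * s - 14 + 1) ∧ 100 * G s (2 * s - 14 + 1) ≤ 183 * G s (2 * s - 14) := by
  have hs1 : 1 ≤ s := by omega
  have hsR : (100000 : ℝ) ≤ (s : ℝ) := by exact_mod_cast hs
  obtain ⟨j, hj⟩ : ∃ j, 2 * s - 15 = j := ⟨_, rfl⟩
  have hjval : j + 1 = 2 * s - 14 := by omega
  have hjn : j + 15 = 2 * s := by omega
  have hjR : ((j:ℝ)) + 15 = 2 * (s:ℝ) := by exact_mod_cast congrArg (fun x : ℕ => (x:ℝ)) hjn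
  obtain ⟨hl, hu⟩ := block4b s hs j (by omega) (by omega)
  rw [← hjval]
  have hjR2 : ((j:ℝ)) ≤ 6 * (s:ℝ) - 2 := by linarith
  exact ⟨low_step hs1 (by norm_num : (0:ℝ) < 199) (by norm_num : (0:ℝ) < 2) (by first | linarith | (push_cast at *; linarith)) hu (by first | linarith | (push_cast at *; linarith)),
    up_step hs1 (by norm_num : (0:ℝ) < 301) (by norm_num : (0:ℝ) < 100) (by first | linarith | (push_cast at *; linarith)) hl (by first | linarith | (push_cast at *; linarith))⟩

lemma chainC3 (s : ℕ) (hs : 100000 ≤ s) :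
    159 * G s (2 * s - 13) ≤ 100 * G s (2 * s - 13 + 1) ∧ 25 * G s (2 * s - 13 + 1) ≤ 46 * G s (2 * s - 13) := by
  have hs1 : 1 ≤ s := by omega
  have hsR : (100000 : ℝ) ≤ (s : ℝ) := by exact_mod_cast hs
  obtain ⟨j, hj⟩ : ∃ j, 2 * s - 14 = j := ⟨_, rfl⟩
  have hjval : j + 1 = 2 * s - 13 := by omega
  have hjn : j + 14 = 2 * s := by omega
  have hjR : ((j:ℝ)) + 14 = 2 * (s:ℝ) := by exact_mod_cast congrArg (fun x : ℕ => (x:ℝ)) hjn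
  obtain ⟨hl, hu⟩ := chainC2 s hs
  rw [show 2 * s - 14 = j from hj] at hl hu
  rw [← hjval]
  have hjR2 : ((j:ℝ)) ≤ 6 * (s:ℝ) - 2 := by linarith
  exact ⟨low_step hs1 (by norm_num : (0:ℝ) < 183) (by norm_num : (0:ℝ) < 100) (by first | linarith | (push_cast at *; linarith)) hu (by first | linarith | (push_cast at *; linarith)),
    up_step hs1 (by norm_num : (0:ℝ) < 3) (by norm_num : (0:ℝ) < 25) (by first | linarith | (push_cast at *; linarith)) hl (by first | linarith | (push_cast at *; linarith))⟩

lemma chainC4 (s : ℕ) (hs : 100000 ≤ s) :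
    317 * G s (2 * s - 12) ≤ 200 * G s (2 * s - 12 + 1) ∧ 25 * G s (2 * s - 12 + 1) ≤ 44 * G s (2 * s - 12) := by
  have hs1 : 1 ≤ s := by omega
  have hsR : (100000 : ℝ) ≤ (s : ℝ) := by exact_mod_cast hs
  obtain ⟨j, hj⟩ : ∃ j, 2 * s - 13 = j := ⟨_, rfl⟩
  have hjval : j + 1 = 2 * s - 12 := by omega
  have hjn : j + 13 = 2 * s := by omega
  have hjR : ((j:ℝ)) + 13 = 2 * (s:ℝ) := by exact_mod_cast congrArg (fun x : ℕ => (x:ℝ)) hjn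
  obtain ⟨hl, hu⟩ := chainC3 s hs
  rw [show 2 * s - 13 = j from hj] at hl hu
  rw [← hjval]
  have hjR2 : ((j:ℝ)) ≤ 6 * (s:ℝ) - 2 := by linarith
  exact ⟨low_step hs1 (by norm_num : (0:ℝ) < 46) (by norm_num : (0:ℝ) < 200) (by first | linarith | (push_cast at *; linarith)) hu (by first | linarith | (push_cast at *; linarith)),
    up_step hs1 (by norm_num : (0:ℝ) < 159) (by norm_num : (0:ℝ) < 25) (by first | linarith | (push_cast at *; linarith)) hl (by first | linarith | (push_cast at *; linarith))⟩

lemma chainC5 (s : ℕ) (hs : 100000 ≤ s) :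
    163 * G s (2 * s - 11) ≤ 100 * G s (2 * s - 11 + 1) ∧ 100 * G s (2 * s - 11 + 1) ≤ 177 * G s (2 * s - 11) := by
  have hs1 : 1 ≤ s := by omega
  have hsR : (100000 : ℝ) ≤ (s : ℝ) := by exact_mod_cast hs
  obtain ⟨j, hj⟩ : ∃ j, 2 * s - 12 = j := ⟨_, rfl⟩
  have hjval : j + 1 = 2 * s - 11 := by omega
  have hjn : j + 12 = 2 * s := by omega
  have hjR : ((j:ℝ)) + 12 = 2 * (s:ℝ) := by exact_mod_cast congrArg (fun x : ℕ => (x:ℝ)) hjn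
  obtain ⟨hl, hu⟩ := chainC4 s hs
  rw [show 2 * s - 12 = j from hj] at hl hu
  rw [← hjval]
  have hjR2 : ((j:ℝ)) ≤ 6 * (s:ℝ) - 2 := by linarith
  exact ⟨low_step hs1 (by norm_num : (0:ℝ) < 44) (by norm_num : (0:ℝ) < 100) (by first | linarith | (push_cast at *; linarith)) hu (by first | linarith | (push_cast at *; linarith)),
    up_step hs1 (by norm_num : (0:ℝ) < 317) (by norm_num : (0:ℝ) < 100) (by first | linarith | (push_cast at *; linarith)) hl (by first | linarith | (push_cast at *; linarith))⟩

lemma window (s : ℕ) (hs : 100000 ≤ s) : ∀ k : ℕ, 2 * s ≤ k + 10 → k ≤ 2 * s + 7 →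
    8 * G s k ≤ 5 * G s (k + 1) ∧ 5 * G s (k + 1) ≤ 9 * G s k := by
  have hs1 : 1 ≤ s := by omega
  have hsR : (100000 : ℝ) ≤ (s : ℝ) := by exact_mod_cast hs
  intro k
  induction k using Nat.strong_induction_on with
  | _ k ih =>
    intro h1 h2
    have hk1 : 1 ≤ k := by omega
    obtain ⟨j, rfl⟩ : ∃ j, k = j + 1 := ⟨k - 1, by omega⟩
    have hjR : ((j:ℝ)) ≤ 6 * (s:ℝ) - 2 := by
      have hy : (j : ℕ) + 2 ≤ 6 * s := by omega
      have hy2 : ((j:ℝ)) + 2 ≤ 6 * (s:ℝ) := by exact_mod_cast hy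
      linarith
    have h1R : 2 * (s:ℝ) ≤ ((j:ℝ) + 1) + 10 := by exact_mod_cast h1
    have h2R : ((j:ℝ) + 1) ≤ 2 * (s:ℝ) + 7 := by exact_mod_cast h2
    by_cases hc : 2 * s ≤ j + 10
    · obtain ⟨hl, hu⟩ := ih j (by omega) hc (by omega)
      exact ⟨low_step hs1 (by norm_num : (0:ℝ) < 9) (by norm_num : (0:ℝ) < 5) (by first | linarith | (push_cast at *; linarith)) hu (by first | linarith | (push_cast at *; linarith)),
        up_step hs1 (by norm_num : (0:ℝ) < 8) (by norm_num : (0:ℝ) < 5) (by first | linarith | (push_cast at *; linarith)) hl (by first | linarith | (push_cast at *; linarith))⟩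
    · -- base : j = 2s - 11, use chainC5
      have hj11 : j = 2 * s - 11 := by omega
      obtain ⟨hl, hu⟩ := chainC5 s hs
      rw [show 2 * s - 11 = j from hj11.symm] at hl hu
      have hjn : j + 11 = 2 * s := by omega
      have hjR3 : ((j:ℝ)) + 11 = 2 * (s:ℝ) := by exact_mod_cast congrArg (fun x : ℕ => (x:ℝ)) hjn
      exact ⟨low_step hs1 (by norm_num : (0:ℝ) < 177) (by norm_num : (0:ℝ) < 5) (by first | linarith | (push_cast at *; linarith)) hu (by first | linarith | (push_cast at *; linarith)),
        up_step hs1 (by norm_num : (0:ℝ) < 163) (by norm_num : (0:ℝ) < 5) (by first | linarith | (push_cast at *; linarith)) hl (by first | linarith | (push_cast at *; linarith))⟩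
lemma r32full (s : ℕ) (hs : 100000 ≤ s) : ∀ k : ℕ, k ≤ 2 * s - 11 →
    3 * G s k ≤ 2 * G s (k + 1) := by
  have hs1 : 1 ≤ s := by omega
  intro k hk
  have hGk : 0 ≤ G s k := G_nonneg s k
  by_cases h0 : 5 * k + 5 ≤ 6 * s
  · exact r32a s hs1 k h0
  by_cases h1 : 5 * k ≤ 8 * s
  · exact (block1 s hs k (by omega) h1).1
  by_cases h2 : 5 * k ≤ 9 * s
  · have := (block2 s hs k (by omega) h2).1
    linarith
  by_cases h3 : 100 * k ≤ 191 * s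
  · have := (block3 s hs k (by omega) h3).1
    linarith
  by_cases h4 : 20 * k ≤ 39 * s
  · have := (block4a s hs k (by omega) h4).1
    linarith
  by_cases h5 : k + 15 ≤ 2 * s
  · have := (block4b s hs k (by omega) h5).1
    linarith
  by_cases h6 : k = 2 * s - 14
  · have := (chainC2 s hs).1; rw [← h6] at this; linarith
  by_cases h7 : k = 2 * s - 13
  · have := (chainC3 s hs).1; rw [← h7] at this; linarith
  by_cases h8 : k = 2 * s - 12
  · have := (chainC4 s hs).1; rw [← h8] at this; linarith
  have h9 : k = 2 * s - 11 := by omega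
  have := (chainC5 s hs).1; rw [← h9] at this; linarith

lemma sumG_le (s : ℕ) (hs : 100000 ≤ s) : ∀ m : ℕ, m ≤ 2 * s - 10 →
    ∑ i ∈ Finset.range (m + 1), G s i ≤ 3 * G s m := by
  intro m
  induction m with
  | zero => intro _; rw [Finset.sum_range_one]; nlinarith [G_nonneg s 0]
  | succ p ih =>
      intro hp
      rw [Finset.sum_range_succ]
      have h1 := ih (by omega)
      have h2 := r32full s hs p (by omega)
      linarith

lemma peel16 (f : ℕ → ℝ) (b : ℕ) :
    ∑ i ∈ Finset.range (b + 17), f i = ∑ i ∈ Finset.range (b + 1), f i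
      + f (b+1) + f (b+2) + f (b+3) + f (b+4) + f (b+5) + f (b+6) + f (b+7) + f (b+8)
      + f (b+9) + f (b+10) + f (b+11) + f (b+12) + f (b+13) + f (b+14) + f (b+15) + f (b+16) := by
  simp [Finset.sum_range_succ]

lemma peel6 (f : ℕ → ℝ) (b : ℕ) :
    ∑ i ∈ Finset.range (b + 7), f i = ∑ i ∈ Finset.range (b + 1), f i
      + f (b+1) + f (b+2) + f (b+3) + f (b+4) + f (b+5) + f (b+6) := by
  simp [Finset.sum_range_succ]

lemma peel4 (f : ℕ → ℝ) (b : ℕ) :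
    ∑ i ∈ Finset.range (b + 11), f i = ∑ i ∈ Finset.range (b + 7), f i
      + f (b+7) + f (b+8) + f (b+9) + f (b+10) := by
  simp [Finset.sum_range_succ]


noncomputable def Tstar (s : ℕ) : ℕ → ℝ := fun i =>
  if i ≤ 2 * s - 4 then 1
  else if i = 2 * s - 3 then 4 / 5 else if i = 2 * s - 2 then 3 / 5
  else if i = 2 * s - 1 then 2 / 5 else if i = 2 * s then 1 / 5 else 0

lemma Tstar_nonneg (s x : ℕ) : 0 ≤ Tstar s x := by
  unfold Tstar; split_ifs <;> norm_num

lemma feas (s : ℕ) (hs : 100000 ≤ s) : LPFeasible (3 * s - 1) (Tstar s) := by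
  constructor
  · intro i _; exact Tstar_nonneg s i
  · intro i j k hijk
    by_cases hi : i ≤ 2 * s - 4
    · have h1 : Tstar s i = 1 := by unfold Tstar; rw [if_pos hi]
      have := Tstar_nonneg s j
      have := Tstar_nonneg s k
      linarith
    by_cases hj : j ≤ 2 * s - 4
    · have h1 : Tstar s j = 1 := by unfold Tstar; rw [if_pos hj]
      have := Tstar_nonneg s i
      have := Tstar_nonneg s k
      linarith
    by_cases hk : k ≤ 2 * s - 4
    · have h1 : Tstar s k = 1 := by unfold Tstar; rw [if_pos hk]
      have := Tstar_nonneg s i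
      have := Tstar_nonneg s j
      linarith
    have key : ∀ x : ℕ, ¬(x ≤ 2 * s - 4) → 2 * (s:ℝ) + 1 - x ≤ 5 * Tstar s x := by
      intro x hx
      unfold Tstar
      rw [if_neg hx]
      by_cases e1 : x = 2 * s - 3
      · rw [if_pos e1, e1]
        have hc : ((2 * s - 3 : ℕ) : ℝ) = 2 * (s:ℝ) - 3 := by
          have h3 : (3:ℕ) ≤ 2 * s := by omega
          push_cast [Nat.cast_sub h3]; ring
        rw [hc]; norm_num
      rw [if_neg e1]
      by_cases e2 : x = 2 * s - 2
      · rw [if_pos e2, e2]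
        have hc : ((2 * s - 2 : ℕ) : ℝ) = 2 * (s:ℝ) - 2 := by
          have h3 : (2:ℕ) ≤ 2 * s := by omega
          push_cast [Nat.cast_sub h3]; ring
        rw [hc]; norm_num
      rw [if_neg e2]
      by_cases e3 : x = 2 * s - 1
      · rw [if_pos e3, e3]
        have hc : ((2 * s - 1 : ℕ) : ℝ) = 2 * (s:ℝ) - 1 := by
          have h3 : (1:ℕ) ≤ 2 * s := by omega
          push_cast [Nat.cast_sub h3]; ring
        rw [hc]; norm_num
      rw [if_neg e3]
      by_cases e4 : x = 2 * s
      · rw [if_pos e4, e4]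
        push_cast; norm_num
      rw [if_neg e4]
      have hx5 : 2 * s + 1 ≤ x := by omega
      have hx5R : 2 * (s:ℝ) + 1 ≤ (x:ℝ) := by exact_mod_cast hx5
      linarith
    have ki := key i hi
    have kj := key j hj
    have kk := key k hk
    have hR : (i:ℝ) + (j:ℝ) + (k:ℝ) + 2 ≤ 6 * (s:ℝ) := by
      have : i + j + k + 2 ≤ 6 * s := by omega
      exact_mod_cast this
    linarith


set_option maxHeartbeats 2000000 in
lemma optimal (s : ℕ) (hs : 100000 ≤ s) (t : ℕ → ℝ) (ht : LPFeasible (3 * s - 1) t) :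
    LPObj (3 * s - 1) (Tstar s) ≤ LPObj (3 * s - 1) t := by
  obtain ⟨ht0, htc⟩ := ht
  obtain ⟨B, hB⟩ : ∃ B, 2 * s - 10 = B := ⟨_, rfl⟩
  have hB10 : B + 10 = 2 * s := by omega
  have hGdef : ∀ i, ((coeff3 (3 * s - 1) i : ℝ)) = G s i := fun i => rfl
  have W0 : 8 * G s (B+0) ≤ 5 * G s (B+1) ∧ 5 * G s (B+1) ≤ 9 * G s (B+0) := by
    have h := window s hs (B+0) (by omega) (by omega)
    rwa [show B+0+1 = B+1 from by omega] at h
  have W1 : 8 * G s (B+1) ≤ 5 * G s (B+2) ∧ 5 * G s (B+2) ≤ 9 * G s (B+1) := by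
    have h := window s hs (B+1) (by omega) (by omega)
    rwa [show B+1+1 = B+2 from by omega] at h
  have W2 : 8 * G s (B+2) ≤ 5 * G s (B+3) ∧ 5 * G s (B+3) ≤ 9 * G s (B+2) := by
    have h := window s hs (B+2) (by omega) (by omega)
    rwa [show B+2+1 = B+3 from by omega] at h
  have W3 : 8 * G s (B+3) ≤ 5 * G s (B+4) ∧ 5 * G s (B+4) ≤ 9 * G s (B+3) := by
    have h := window s hs (B+3) (by omega) (by omega)
    rwa [show B+3+1 = B+4 from by omega] at h
  have W4 : 8 * G s (B+4) ≤ 5 * G s (B+5) ∧ 5 * G s (B+5) ≤ 9 * G s (B+4) := by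
    have h := window s hs (B+4) (by omega) (by omega)
    rwa [show B+4+1 = B+5 from by omega] at h
  have W5 : 8 * G s (B+5) ≤ 5 * G s (B+6) ∧ 5 * G s (B+6) ≤ 9 * G s (B+5) := by
    have h := window s hs (B+5) (by omega) (by omega)
    rwa [show B+5+1 = B+6 from by omega] at h
  have W6 : 8 * G s (B+6) ≤ 5 * G s (B+7) ∧ 5 * G s (B+7) ≤ 9 * G s (B+6) := by
    have h := window s hs (B+6) (by omega) (by omega)
    rwa [show B+6+1 = B+7 from by omega] at h
  have W7 : 8 * G s (B+7) ≤ 5 * G s (B+8) ∧ 5 * G s (B+8) ≤ 9 * G s (B+7) := by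
    have h := window s hs (B+7) (by omega) (by omega)
    rwa [show B+7+1 = B+8 from by omega] at h
  have W8 : 8 * G s (B+8) ≤ 5 * G s (B+9) ∧ 5 * G s (B+9) ≤ 9 * G s (B+8) := by
    have h := window s hs (B+8) (by omega) (by omega)
    rwa [show B+8+1 = B+9 from by omega] at h
  have W9 : 8 * G s (B+9) ≤ 5 * G s (B+10) ∧ 5 * G s (B+10) ≤ 9 * G s (B+9) := by
    have h := window s hs (B+9) (by omega) (by omega)
    rwa [show B+9+1 = B+10 from by omega] at h
  have W10 : 8 * G s (B+10) ≤ 5 * G s (B+11) ∧ 5 * G s (B+11) ≤ 9 * G s (B+10) := by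
    have h := window s hs (B+10) (by omega) (by omega)
    rwa [show B+10+1 = B+11 from by omega] at h
  have W11 : 8 * G s (B+11) ≤ 5 * G s (B+12) ∧ 5 * G s (B+12) ≤ 9 * G s (B+11) := by
    have h := window s hs (B+11) (by omega) (by omega)
    rwa [show B+11+1 = B+12 from by omega] at h
  have W12 : 8 * G s (B+12) ≤ 5 * G s (B+13) ∧ 5 * G s (B+13) ≤ 9 * G s (B+12) := by
    have h := window s hs (B+12) (by omega) (by omega)
    rwa [show B+12+1 = B+13 from by omega] at h
  have W13 : 8 * G s (B+13) ≤ 5 * G s (B+14) ∧ 5 * G s (B+14) ≤ 9 * G s (B+13) := by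
    have h := window s hs (B+13) (by omega) (by omega)
    rwa [show B+13+1 = B+14 from by omega] at h
  have W14 : 8 * G s (B+14) ≤ 5 * G s (B+15) ∧ 5 * G s (B+15) ≤ 9 * G s (B+14) := by
    have h := window s hs (B+14) (by omega) (by omega)
    rwa [show B+14+1 = B+15 from by omega] at h
  have W15 : 8 * G s (B+15) ≤ 5 * G s (B+16) ∧ 5 * G s (B+16) ≤ 9 * G s (B+15) := by
    have h := window s hs (B+15) (by omega) (by omega)
    rwa [show B+15+1 = B+16 from by omega] at h
  have hSum : ∑ i ∈ Finset.range (B + 1), G s i ≤ 3 * G s (B+0) := by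
    have := sumG_le s hs (2 * s - 10) (le_refl _)
    rw [hB] at this
    simpa using this
  have hg0 : 0 ≤ G s (B+0) := G_nonneg s _
  have hg1 : 0 ≤ G s (B+1) := G_nonneg s _
  have hg2 : 0 ≤ G s (B+2) := G_nonneg s _
  have hg3 : 0 ≤ G s (B+3) := G_nonneg s _
  have hg4 : 0 ≤ G s (B+4) := G_nonneg s _
  have hg5 : 0 ≤ G s (B+5) := G_nonneg s _
  have hg6 : 0 ≤ G s (B+6) := G_nonneg s _
  have hg7 : 0 ≤ G s (B+7) := G_nonneg s _
  have hg8 : 0 ≤ G s (B+8) := G_nonneg s _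
  have hg9 : 0 ≤ G s (B+9) := G_nonneg s _
  have hg10 : 0 ≤ G s (B+10) := G_nonneg s _
  have hg11 : 0 ≤ G s (B+11) := G_nonneg s _
  have hg12 : 0 ≤ G s (B+12) := G_nonneg s _
  have hg13 : 0 ≤ G s (B+13) := G_nonneg s _
  have hg14 : 0 ≤ G s (B+14) := G_nonneg s _
  have hg15 : 0 ≤ G s (B+15) := G_nonneg s _
  have hg16 : 0 ≤ G s (B+16) := G_nonneg s _
  set z : ℝ := (2 * G s (B+7) + 4 * G s (B+8) + G s (B+9) - 2 * G s (B+10)) / 5 with hzdef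
  have hz0 : 0 ≤ z := by
    rw [hzdef]
    linarith [W7.2, W8.2, W9.2]
  have hz8 : z ≤ G s (B+8) := by
    rw [hzdef]
    linarith [W7.1, W8.1, W9.1]
  have hz9 : z ≤ G s (B+9) := by
    rw [hzdef]
    linarith [W7.1, W8.1, W9.1]
  have I1 : (1/2) * (∑ i ∈ Finset.range (B + 1), G s i)
      + G s (B+1) + G s (B+2) + G s (B+3) + G s (B+4) + G s (B+5)
      + 2 * G s (B+6) + G s (B+7) + z ≤ G s (B+11) := by
    linarith [hSum, hz8, W0.1, W1.1, W2.1, W3.1, W4.1, W5.1, W6.1, W7.1, W8.1, W9.1, W10.1]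
  have I2 : (1/2) * (∑ i ∈ Finset.range (B + 1), G s i) + G s (B+5) ≤ G s (B+12) := by
    linarith [hSum, W0.1, W1.1, W2.1, W3.1, W4.1, W5.1, W6.1, W7.1, W8.1, W9.1, W10.1, W11.1]
  have I3 : (1/2) * (∑ i ∈ Finset.range (B + 1), G s i) + G s (B+4) ≤ G s (B+13) := by
    linarith [hSum, W0.1, W1.1, W2.1, W3.1, W4.1, W5.1, W6.1, W7.1, W8.1, W9.1, W10.1, W11.1, W12.1]
  have I4 : (1/2) * (∑ i ∈ Finset.range (B + 1), G s i) + G s (B+3) ≤ G s (B+14) := by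
    linarith [hSum, W0.1, W1.1, W2.1, W3.1, W4.1, W5.1, W6.1, W7.1, W8.1, W9.1, W10.1, W11.1, W12.1, W13.1]
  have I5 : G s (B+2) ≤ G s (B+15) := by
    linarith [W2.1, W3.1, W4.1, W5.1, W6.1, W7.1, W8.1, W9.1, W10.1, W11.1, W12.1, W13.1, W14.1]
  have I6 : G s (B+1) ≤ G s (B+16) := by
    linarith [W1.1, W2.1, W3.1, W4.1, W5.1, W6.1, W7.1, W8.1, W9.1, W10.1, W11.1, W12.1, W13.1, W14.1, W15.1]
  have hT1 : ∀ i, i ≤ B + 6 → Tstar s i = 1 := by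
    intro i hi; unfold Tstar; rw [if_pos (by omega)]
  have hT7 : Tstar s (B+7) = 4/5 := by
    unfold Tstar; rw [if_neg (by omega), if_pos (by omega)]
  have hT8 : Tstar s (B+8) = 3/5 := by
    unfold Tstar; rw [if_neg (by omega), if_neg (by omega), if_pos (by omega)]
  have hT9 : Tstar s (B+9) = 2/5 := by
    unfold Tstar; rw [if_neg (by omega), if_neg (by omega), if_neg (by omega), if_pos (by omega)]
  have hT10 : Tstar s (B+10) = 1/5 := by
    unfold Tstar
    rw [if_neg (by omega), if_neg (by omega), if_neg (by omega), if_neg (by omega), if_pos (by omega)]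
  have hT0 : ∀ x, B + 11 ≤ x → Tstar s x = 0 := by
    intro x hx
    unfold Tstar
    rw [if_neg (by omega), if_neg (by omega), if_neg (by omega), if_neg (by omega), if_neg (by omega)]
  have htail0 : ∑ i ∈ Finset.Ico (B+11) (3*B+29), G s i * Tstar s i = 0 := by
    apply Finset.sum_eq_zero
    intro x hx
    rw [hT0 x (Finset.mem_Ico.mp hx).1, mul_zero]
  have hsum1 : ∑ i ∈ Finset.range (B+7), G s i * Tstar s i = ∑ i ∈ Finset.range (B+7), G s i := by
    apply Finset.sum_congr rfl
    intro i hi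
    have hi2 : i < B + 7 := Finset.mem_range.mp hi
    rw [hT1 i (by omega), mul_one]
  have hval : LPObj (3 * s - 1) (Tstar s)
      = 3 * (∑ i ∈ Finset.range (B+7), G s i)
        + (12 * G s (B+7) + 9 * G s (B+8) + 6 * G s (B+9) + 3 * G s (B+10)) / 5 := by
    unfold LPObj
    simp only [hGdef]
    rw [show 2 * (3 * s - 1) + 1 = 3 * B + 29 from by omega]
    rw [← Finset.sum_range_add_sum_Ico (fun i => G s i * Tstar s i)
      (show B + 11 ≤ 3 * B + 29 from by omega)]
    rw [htail0, add_zero]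
    rw [peel4 (fun i => G s i * Tstar s i) B]
    rw [hsum1, hT7, hT8, hT9, hT10]
    ring
  rw [hval]
  unfold LPObj
  simp only [hGdef]
  rw [show 2 * (3 * s - 1) + 1 = 3 * B + 29 from by omega]
  have hdrop : ∑ i ∈ Finset.range (B+17), G s i * t i
      + ∑ i ∈ Finset.Ico (B+17) (3*B+29), G s i * t i
      = ∑ i ∈ Finset.range (3*B+29), G s i * t i :=
    Finset.sum_range_add_sum_Ico _ (by omega)
  have htail : 0 ≤ ∑ i ∈ Finset.Ico (B+17) (3*B+29), G s i * t i := by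
    apply Finset.sum_nonneg
    intro x hx
    have hx2 := (Finset.mem_Ico.mp hx).2
    exact mul_nonneg (G_nonneg s x) (ht0 x (by omega))
  have hpeel := peel16 (fun i => G s i * t i) B
  beta_reduce at hpeel
  have hS6 := peel6 (G s) B
  have haS : (1 - (t (B+11) + t (B+12) + t (B+13) + t (B+14))/2) * (∑ i ∈ Finset.range (B+1), G s i)
      ≤ ∑ i ∈ Finset.range (B+1), G s i * t i := by
    rw [mul_comm, Finset.sum_mul]
    apply Finset.sum_le_sum
    intro i hi
    have hi2 : i < B + 1 := Finset.mem_range.mp hi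
    have c1 := htc i (B+11) (B+12) (by omega)
    have c2 := htc i (B+13) (B+14) (by omega)
    exact mul_le_mul_of_nonneg_left (by linarith) (G_nonneg s i)
  have hc1 : 1 ≤ t (B+1) + t (B+11) + t (B+16) := htc _ _ _ (by omega)
  have hc2 : 1 ≤ t (B+2) + t (B+11) + t (B+15) := htc _ _ _ (by omega)
  have hc3 : 1 ≤ t (B+3) + t (B+11) + t (B+14) := htc _ _ _ (by omega)
  have hc4 : 1 ≤ t (B+4) + t (B+11) + t (B+13) := htc _ _ _ (by omega)
  have hc5 : 1 ≤ t (B+5) + t (B+11) + t (B+12) := htc _ _ _ (by omega)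
  have hc6 : 1 ≤ t (B+6) + t (B+11) + t (B+11) := htc _ _ _ (by omega)
  have hq2 : 1 ≤ t (B+7) + t (B+10) + t (B+11) := htc _ _ _ (by omega)
  have hq3 : 1 ≤ t (B+8) + t (B+9) + t (B+11) := htc _ _ _ (by omega)
  have hq4 : 1 ≤ t (B+8) + t (B+10) + t (B+10) := htc _ _ _ (by omega)
  have hq5 : 1 ≤ t (B+9) + t (B+9) + t (B+10) := htc _ _ _ (by omega)
  have ht1 : 0 ≤ t (B+1) := ht0 _ (by omega)
  have ht2 : 0 ≤ t (B+2) := ht0 _ (by omega)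
  have ht3 : 0 ≤ t (B+3) := ht0 _ (by omega)
  have ht4 : 0 ≤ t (B+4) := ht0 _ (by omega)
  have ht5 : 0 ≤ t (B+5) := ht0 _ (by omega)
  have ht6 : 0 ≤ t (B+6) := ht0 _ (by omega)
  have ht7 : 0 ≤ t (B+7) := ht0 _ (by omega)
  have ht8 : 0 ≤ t (B+8) := ht0 _ (by omega)
  have ht9 : 0 ≤ t (B+9) := ht0 _ (by omega)
  have ht10 : 0 ≤ t (B+10) := ht0 _ (by omega)
  have ht11 : 0 ≤ t (B+11) := ht0 _ (by omega)
  have ht12 : 0 ≤ t (B+12) := ht0 _ (by omega)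
  have ht13 : 0 ≤ t (B+13) := ht0 _ (by omega)
  have ht14 : 0 ≤ t (B+14) := ht0 _ (by omega)
  have ht15 : 0 ≤ t (B+15) := ht0 _ (by omega)
  have ht16 : 0 ≤ t (B+16) := ht0 _ (by omega)
  have P1 : 0 ≤ G s (B+1) * t (B+1) + G s (B+1) * t (B+11) + G s (B+1) * t (B+16) - G s (B+1) := by
    linarith [mul_nonneg hg1 (show (0:ℝ) ≤ t (B+1) + t (B+11) + t (B+16) - 1 by linarith)]
  have P2 : 0 ≤ G s (B+2) * t (B+2) + G s (B+2) * t (B+11) + G s (B+2) * t (B+15) - G s (B+2) := by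
    linarith [mul_nonneg hg2 (show (0:ℝ) ≤ t (B+2) + t (B+11) + t (B+15) - 1 by linarith)]
  have P3 : 0 ≤ G s (B+3) * t (B+3) + G s (B+3) * t (B+11) + G s (B+3) * t (B+14) - G s (B+3) := by
    linarith [mul_nonneg hg3 (show (0:ℝ) ≤ t (B+3) + t (B+11) + t (B+14) - 1 by linarith)]
  have P4 : 0 ≤ G s (B+4) * t (B+4) + G s (B+4) * t (B+11) + G s (B+4) * t (B+13) - G s (B+4) := by
    linarith [mul_nonneg hg4 (show (0:ℝ) ≤ t (B+4) + t (B+11) + t (B+13) - 1 by linarith)]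
  have P5 : 0 ≤ G s (B+5) * t (B+5) + G s (B+5) * t (B+11) + G s (B+5) * t (B+12) - G s (B+5) := by
    linarith [mul_nonneg hg5 (show (0:ℝ) ≤ t (B+5) + t (B+11) + t (B+12) - 1 by linarith)]
  have P6 : 0 ≤ G s (B+6) * t (B+6) + 2 * (G s (B+6) * t (B+11)) - G s (B+6) := by
    linarith [mul_nonneg hg6 (show (0:ℝ) ≤ t (B+6) + 2 * t (B+11) - 1 by linarith)]
  have Q2 : 0 ≤ G s (B+7) * t (B+7) + G s (B+7) * t (B+10) + G s (B+7) * t (B+11) - G s (B+7) := by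
    linarith [mul_nonneg hg7 (show (0:ℝ) ≤ t (B+7) + t (B+10) + t (B+11) - 1 by linarith)]
  have Q3 : 0 ≤ z * t (B+8) + z * t (B+9) + z * t (B+11) - z := by
    linarith [mul_nonneg hz0 (show (0:ℝ) ≤ t (B+8) + t (B+9) + t (B+11) - 1 by linarith)]
  have Q4 : 0 ≤ G s (B+8) * t (B+8) + 2 * (G s (B+8) * t (B+10)) - G s (B+8)
      - z * t (B+8) - 2 * (z * t (B+10)) + z := by
    linarith [mul_nonneg (show (0:ℝ) ≤ G s (B+8) - z by linarith)
      (show (0:ℝ) ≤ t (B+8) + 2 * t (B+10) - 1 by linarith)]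
  have Q5 : 0 ≤ 2 * (G s (B+9) * t (B+9)) + G s (B+9) * t (B+10) - G s (B+9)
      - 2 * (z * t (B+9)) - z * t (B+10) + z := by
    linarith [mul_nonneg (show (0:ℝ) ≤ G s (B+9) - z by linarith)
      (show (0:ℝ) ≤ 2 * t (B+9) + t (B+10) - 1 by linarith)]
  have R11 : 0 ≤ G s (B+11) * t (B+11) - ((1/2) * ((∑ i ∈ Finset.range (B+1), G s i) * t (B+11)) + G s (B+1) * t (B+11)
      + G s (B+2) * t (B+11) + G s (B+3) * t (B+11) + G s (B+4) * t (B+11)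
      + G s (B+5) * t (B+11) + 2 * (G s (B+6) * t (B+11)) + G s (B+7) * t (B+11) + z * t (B+11)) := by
    linarith [mul_nonneg (show (0:ℝ) ≤ G s (B+11) - ((1/2) * (∑ i ∈ Finset.range (B+1), G s i) + G s (B+1) + G s (B+2)
      + G s (B+3) + G s (B+4) + G s (B+5) + 2 * G s (B+6) + G s (B+7) + z) by linarith) ht11]
  have R12 : 0 ≤ G s (B+12) * t (B+12) - ((1/2) * ((∑ i ∈ Finset.range (B+1), G s i) * t (B+12)) + G s (B+5) * t (B+12)) := by
    linarith [mul_nonneg (show (0:ℝ) ≤ G s (B+12) - ((1/2) * (∑ i ∈ Finset.range (B+1), G s i) + G s (B+5)) by linarith) ht12]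
  have R13 : 0 ≤ G s (B+13) * t (B+13) - ((1/2) * ((∑ i ∈ Finset.range (B+1), G s i) * t (B+13)) + G s (B+4) * t (B+13)) := by
    linarith [mul_nonneg (show (0:ℝ) ≤ G s (B+13) - ((1/2) * (∑ i ∈ Finset.range (B+1), G s i) + G s (B+4)) by linarith) ht13]
  have R14 : 0 ≤ G s (B+14) * t (B+14) - ((1/2) * ((∑ i ∈ Finset.range (B+1), G s i) * t (B+14)) + G s (B+3) * t (B+14)) := by
    linarith [mul_nonneg (show (0:ℝ) ≤ G s (B+14) - ((1/2) * (∑ i ∈ Finset.range (B+1), G s i) + G s (B+3)) by linarith) ht14]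
  have R15 : 0 ≤ G s (B+15) * t (B+15) - G s (B+2) * t (B+15) := by
    linarith [mul_nonneg (show (0:ℝ) ≤ G s (B+15) - G s (B+2) by linarith) ht15]
  have R16 : 0 ≤ G s (B+16) * t (B+16) - G s (B+1) * t (B+16) := by
    linarith [mul_nonneg (show (0:ℝ) ≤ G s (B+16) - G s (B+1) by linarith) ht16]
  have haSe : 0 ≤ (∑ i ∈ Finset.range (B+1), G s i * t i) - (∑ i ∈ Finset.range (B+1), G s i)
      + ((∑ i ∈ Finset.range (B+1), G s i) * t (B+11) + (∑ i ∈ Finset.range (B+1), G s i) * t (B+12) + (∑ i ∈ Finset.range (B+1), G s i) * t (B+13) + (∑ i ∈ Finset.range (B+1), G s i) * t (B+14)) / 2 := by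
    linarith [haS]
  have hzt10 : 5 * (z * t (B+10)) = 2 * (G s (B+7) * t (B+10)) + 4 * (G s (B+8) * t (B+10))
      + G s (B+9) * t (B+10) - 2 * (G s (B+10) * t (B+10)) := by
    linear_combination (5 * t (B+10)) * hzdef
  linarith [hzdef, hzt10, hdrop, htail, hpeel, hS6, haSe, P1, P2, P3, P4, P5, P6, Q2, Q3, Q4, Q5,
    R11, R12, R13, R14, R15, R16]

end CapLP

/-- For `n = 3 s - 1` with `s` large, the vector with `tᵢ = 1` for `i ≤ 2s-4`,
`t_{2s-3} = 4/5`, `t_{2s-2} = 3/5`, `t_{2s-1} = 2/5`, `t_{2s} = 1/5` and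
`tᵢ = 0` for `i ≥ 2s+1` is an optimal solution of the cap set linear program. -/
theorem lp_optimal_three_s_sub_one :
    ∃ S : ℕ, ∀ s : ℕ, S ≤ s →
      LPFeasible (3 * s - 1) (fun i => if i ≤ 2 * s - 4 then 1
        else if i = 2 * s - 3 then 4 / 5 else if i = 2 * s - 2 then 3 / 5
        else if i = 2 * s - 1 then 2 / 5 else if i = 2 * s then 1 / 5 else 0) ∧
      ∀ t : ℕ → ℝ, LPFeasible (3 * s - 1) t →
        LPObj (3 * s - 1) (fun i => if i ≤ 2 * s - 4 then 1
          else if i = 2 * s - 3 then 4 / 5 else if i = 2 * s - 2 then 3 / 5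
          else if i = 2 * s - 1 then 2 / 5 else if i = 2 * s then 1 / 5 else 0) ≤
        LPObj (3 * s - 1) t := by
  refine ⟨100000, fun s hs => ⟨CapLP.feas s hs, fun t ht => CapLP.optimal s hs t ht⟩⟩
end

section
/- There exists S such that for all integers s ≥ S, setting n = 3s − 2, the vector (t₀*, …, t_{2n}*) defined by t_i* = 1 for 0 ≤ i ≤ 2s − 4, t_{2s−3}* = 3/4, t_{2s−2}* = 2/4, t_{2s−1}* = 1/4, and t_i* = 0 for i ≥ 2s, is an optimal solution of the cap set linear program: it is feasible, and every feasible vector (t₀, …, t_{2n}) satisfies 3·∑_{i=0}^{2n} f_{n,i}·t_i ≥ 3·∑_{i=0}^{2n} f_{n,i}·t_i*. -/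
open Polynomial Finset

lemma tri_conv (P : Polynomial ℕ) :
    (1 + X + X ^ 2) * P = P + P * X ^ 1 + P * X ^ 2 := by ring

lemma conv0 (P : Polynomial ℕ) : ((1 + X + X ^ 2) * P).coeff 0 = P.coeff 0 := by
  simp [tri_conv, coeff_mul_X_pow']

lemma conv1 (P : Polynomial ℕ) : ((1 + X + X ^ 2) * P).coeff 1 = P.coeff 1 + P.coeff 0 := by
  simp [tri_conv, coeff_mul_X_pow']

lemma conv2 (P : Polynomial ℕ) (j : ℕ) :
    ((1 + X + X ^ 2) * P).coeff (j + 2) = P.coeff (j + 2) + P.coeff (j + 1) + P.coeff j := by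
  simp [tri_conv, coeff_mul_X_pow']

lemma coeff3_def (n i : ℕ) :
    coeff3 n i = (((1 + X + X ^ 2 : Polynomial ℕ)) ^ n).coeff i := rfl

lemma pow_succ3 (n : ℕ) :
    ((1 + X + X ^ 2 : Polynomial ℕ)) ^ (n + 1) = (1 + X + X ^ 2) * (1 + X + X ^ 2) ^ n := by
  ring

lemma coeff3_succ0 (n : ℕ) : coeff3 (n + 1) 0 = coeff3 n 0 := by
  rw [coeff3_def, pow_succ3, conv0, ← coeff3_def]

lemma coeff3_succ1 (n : ℕ) : coeff3 (n + 1) 1 = coeff3 n 1 + coeff3 n 0 := by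
  rw [coeff3_def, pow_succ3, conv1, ← coeff3_def, ← coeff3_def]

lemma coeff3_succ2 (n j : ℕ) :
    coeff3 (n + 1) (j + 2) = coeff3 n (j + 2) + coeff3 n (j + 1) + coeff3 n j := by
  rw [coeff3_def, pow_succ3, conv2, ← coeff3_def, ← coeff3_def, ← coeff3_def]

lemma coeff3_zero (n : ℕ) : coeff3 n 0 = 1 := by
  induction n with
  | zero => simp [coeff3]
  | succ n ih => rw [coeff3_succ0, ih]

lemma coeff3_one (n : ℕ) : coeff3 n 1 = n := by
  induction n with
  | zero => simp [coeff3, coeff_one]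
  | succ n ih => rw [coeff3_succ1, ih, coeff3_zero]

lemma coeff3_vanish (n i : ℕ) (h : 2 * n < i) : coeff3 n i = 0 := by
  rw [coeff3_def]
  apply coeff_eq_zero_of_natDegree_lt
  calc ((1 + X + X ^ 2 : Polynomial ℕ) ^ n).natDegree ≤ n * (1 + X + X ^ 2 : Polynomial ℕ).natDegree :=
        natDegree_pow_le
    _ ≤ n * 2 := by
        apply Nat.mul_le_mul_left
        apply le_trans (natDegree_add_le _ _)
        simp [natDegree_X_pow]
        apply le_trans (natDegree_add_le _ _)
        simp
    _ < i := by omega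

lemma coeff3_pos (n : ℕ) : ∀ i, i ≤ 2 * n → 1 ≤ coeff3 n i := by
  induction n with
  | zero => intro i hi; interval_cases i <;> simp [coeff3]
  | succ n ih =>
    intro i hi
    match i with
    | 0 => rw [coeff3_zero]
    | 1 => rw [coeff3_one]; omega
    | (j+2) =>
      rw [coeff3_succ2]
      have : 1 ≤ coeff3 n j := ih j (by omega)
      omega

lemma tri_natDegree_le : (1 + X + X ^ 2 : Polynomial ℕ).natDegree ≤ 2 := by
  apply le_trans (natDegree_add_le _ _)
  simp [natDegree_X_pow]
  apply le_trans (natDegree_add_le _ _)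
  simp

lemma tri_reflect : reflect 2 (1 + X + X ^ 2 : Polynomial ℕ) = 1 + X + X ^ 2 := by
  ext i
  rw [coeff_reflect]
  match i with
  | 0 => have : revAt 2 0 = 2 := revAt_zero 2
         rw [this]; simp [coeff_one, coeff_X, coeff_X_pow]
  | 1 => have : revAt 2 1 = 1 := by rw [revAt_le] <;> omega
         rw [this]
  | 2 => have : revAt 2 2 = 0 := by rw [revAt_le] <;> omega
         rw [this]; simp [coeff_one, coeff_X, coeff_X_pow]
  | (k+3) =>
         have : revAt 2 (k+3) = k+3 := revAt_eq_self_of_lt (by omega)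
         rw [this]

lemma reflect_pow3 (n : ℕ) :
    reflect (2 * n) ((1 + X + X ^ 2 : Polynomial ℕ) ^ n) = (1 + X + X ^ 2) ^ n := by
  induction n with
  | zero => simp
  | succ n ih =>
    have hdeg : ((1 + X + X ^ 2 : Polynomial ℕ) ^ n).natDegree ≤ 2 * n := by
      calc ((1 + X + X ^ 2 : Polynomial ℕ) ^ n).natDegree
          ≤ n * (1 + X + X ^ 2 : Polynomial ℕ).natDegree := natDegree_pow_le
        _ ≤ n * 2 := Nat.mul_le_mul_left _ tri_natDegree_le
        _ = 2 * n := by ring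
    have h : 2 * (n + 1) = 2 + 2 * n := by ring
    rw [h, pow_succ3, reflect_mul _ _ tri_natDegree_le hdeg, tri_reflect, ih, ← pow_succ3]

lemma coeff3_symm (n i : ℕ) (h : i ≤ 2 * n) : coeff3 n i = coeff3 n (2 * n - i) := by
  conv_lhs => rw [coeff3_def, ← reflect_pow3 n]
  rw [coeff_reflect, revAt_le h, ← coeff3_def]

lemma coeff3_mono (n : ℕ) : ∀ i, i < n → coeff3 n i ≤ coeff3 n (i + 1) := by
  induction n with
  | zero => intro i hi; omega
  | succ n ih =>
    intro i hi
    match i with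
    | 0 =>
      rw [coeff3_zero, coeff3_one]; omega
    | 1 =>
      have h2 : coeff3 (n+1) 2 = coeff3 n 2 + coeff3 n 1 + coeff3 n 0 := coeff3_succ2 n 0
      rw [coeff3_succ1, h2]; omega
    | (j+2) =>
      have hj : j + 2 ≤ n := by omega
      rw [coeff3_succ2, coeff3_succ2]
      have key : coeff3 n j ≤ coeff3 n (j + 3) := by
        rcases Nat.lt_or_ge (j + 3) (n + 1) with h | h
        · calc coeff3 n j ≤ coeff3 n (j+1) := ih j (by omega)
            _ ≤ coeff3 n (j+2) := ih (j+1) (by omega)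
            _ ≤ coeff3 n (j+3) := ih (j+2) (by omega)
        · have hn1 : j + 3 = n + 1 := by omega
          have hsym : coeff3 n (n+1) = coeff3 n (n-1) := by
            have := coeff3_symm n (n+1) (by omega)
            rwa [show 2*n - (n+1) = n - 1 by omega] at this
          rw [hn1, hsym]
          have : coeff3 n (n-2) ≤ coeff3 n (n-2+1) := ih (n-2) (by omega)
          rwa [show n-2 = j by omega, show j + 1 = n - 1 by omega] at this
      simp only [show j+1+2 = j+3 by omega, show j+1+1 = j+2 by omega]
      omega

lemma coeff3_mono' (n a b : ℕ) (hab : a ≤ b) (hb : b ≤ n) : coeff3 n a ≤ coeff3 n b := by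
  induction b, hab using Nat.le_induction with
  | base => exact le_refl _
  | succ b hab ih =>
    exact le_trans (ih (by omega)) (coeff3_mono n b (by omega))

lemma conv2X (P : Polynomial ℕ) (j : ℕ) :
    ((1 + C 2 * X) * P).coeff (j + 1) = P.coeff (j + 1) + 2 * P.coeff j := by
  have h : (1 + C 2 * X) * P = P + C 2 * (X * P) := by ring
  rw [h, coeff_add, coeff_C_mul, coeff_X_mul]

lemma coeff3_rec (n j : ℕ) (hn : 1 ≤ n) :
    (j + 2) * coeff3 n (j + 2) + (j + 1) * coeff3 n (j + 1) + j * coeff3 n j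
      = n * coeff3 n (j + 1) + 2 * n * coeff3 n j := by
  obtain ⟨m, rfl⟩ : ∃ m, n = m + 1 := ⟨n - 1, by omega⟩
  have dtri : derivative (1 + X + X ^ 2 : Polynomial ℕ) = 1 + C 2 * X := by
    have : derivative (X ^ 2 : Polynomial ℕ) = C 2 * X := by
      rw [derivative_X_pow]; norm_num
    simp [this]
  have hkey : (1 + X + X ^ 2) * derivative ((1 + X + X ^ 2 : Polynomial ℕ) ^ (m + 1))
      = C (m + 1 : ℕ) * ((1 + C 2 * X) * (1 + X + X ^ 2) ^ (m + 1)) := by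
    rw [derivative_pow_succ, dtri]
    simp only [Nat.cast_id]
    ring
  have hc := congrArg (fun q : Polynomial ℕ => q.coeff (j + 1)) hkey
  simp only [coeff_C_mul] at hc
  rw [conv2X] at hc
  match j with
  | 0 =>
    rw [conv1, coeff_derivative, coeff_derivative] at hc
    simp only [Nat.cast_id, ← coeff3_def] at hc
    norm_num at hc
    rw [coeff3_zero] at hc ⊢
    zify at hc ⊢
    linear_combination hc
  | (k+1) =>
    rw [show k + 1 + 1 = k + 2 from rfl, conv2, coeff_derivative, coeff_derivative,
      coeff_derivative] at hc
    simp only [Nat.cast_id, ← coeff3_def] at hc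
    rw [show k + 2 + 1 = k + 3 from rfl, show k + 1 + 1 = k + 2 from rfl] at hc
    zify at hc ⊢
    linear_combination hc

lemma coeff3_rec_real (n j : ℕ) (hn : 1 ≤ n) :
    ((j : ℝ) + 2) * (coeff3 n (j+2) : ℝ) + ((j : ℝ) + 1) * (coeff3 n (j+1) : ℝ)
      + (j : ℝ) * (coeff3 n j : ℝ)
      = (n : ℝ) * (coeff3 n (j+1) : ℝ) + 2 * (n : ℝ) * (coeff3 n j : ℝ) := by
  have h := coeff3_rec n j hn
  have := congrArg (fun x : ℕ => (x : ℝ)) h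
  push_cast at this
  linarith [this]

lemma ratio_lemma (s : ℕ) (hs : 100 ≤ s) :
    ∀ i, i ≤ 2 * s - 1 → 8 * (coeff3 (3*s-2) i : ℝ) ≤ 5 * (coeff3 (3*s-2) (i+1) : ℝ) := by
  set n := 3 * s - 2 with hndef
  have hn1 : 1 ≤ n := by omega
  have hncast : (n : ℝ) = 3 * (s : ℝ) - 2 := by
    rw [hndef]; push_cast [Nat.cast_sub (by omega : 2 ≤ 3 * s)]; ring
  have hsR : (100 : ℝ) ≤ (s : ℝ) := by exact_mod_cast hs
  intro i
  induction i using Nat.strong_induction_on with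
  | _ i IH =>
    intro hi
    match i with
    | 0 =>
      rw [coeff3_zero, coeff3_one]
      push_cast
      rw [hncast]  -- might fail since already cast; fix below
      linarith
    | 1 =>
      have e0 := coeff3_rec_real n 0 hn1
      rw [coeff3_zero, coeff3_one] at e0
      push_cast at e0
      rw [coeff3_one]
      have h2 : (2:ℝ) * (coeff3 n 2 : ℝ) = (n:ℝ)^2 + (n:ℝ) := by
        norm_num at e0; nlinarith [e0]
      push_cast
      nlinarith [h2, hncast, hsR]
    | (k+2) =>
      have IH2 : 8 * (coeff3 n k : ℝ) ≤ 5 * (coeff3 n (k+1) : ℝ) := IH k (by omega) (by omega)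
      have e2 := coeff3_rec_real n k hn1
      have e1 := coeff3_rec_real n (k+1) hn1
      simp only [show k+1+2 = k+3 by omega, show k+1+1 = k+2 by omega] at e1
      push_cast at e1 e2
      set F0 := (coeff3 n k : ℝ)
      set F1 := (coeff3 n (k+1) : ℝ)
      set F2 := (coeff3 n (k+2) : ℝ)
      set F3 := (coeff3 n (k+3) : ℝ)
      have hF0 : (0:ℝ) ≤ F0 := Nat.cast_nonneg _
      have hF1 : (0:ℝ) ≤ F1 := Nat.cast_nonneg _
      have hF2 : (0:ℝ) ≤ F2 := Nat.cast_nonneg _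
      have hF3 : (0:ℝ) ≤ F3 := Nat.cast_nonneg _
      have hkR : (k : ℝ) ≤ 2 * (s:ℝ) - 3 := by
        have : k ≤ 2*s - 3 := by omega
        have := (Nat.cast_le (α := ℝ)).2 this
        push_cast [Nat.cast_sub (by omega : 3 ≤ 2*s)] at this
        linarith
      have hkR0 : (0:ℝ) ≤ (k:ℝ) := Nat.cast_nonneg _
      -- h6 : 8 (k+2) F2 ≤ D F1 with D = 18n - 13k - 8
      have hprod : (2*(n:ℝ) - k) * (8*F0) ≤ (2*(n:ℝ) - k) * (5*F1) :=
        mul_le_mul_of_nonneg_left IH2 (by rw [hncast]; linarith)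
      have h6 : 8*((k:ℝ)+2)*F2 ≤ (18*(n:ℝ) - 13*(k:ℝ) - 8) * F1 := by nlinarith [e2, hprod]
      -- multiply e1 by D and use h6
      have hD : (0:ℝ) < 18*(n:ℝ) - 13*(k:ℝ) - 8 := by rw [hncast]; linarith
      have hc1 : (0:ℝ) ≤ 2*(n:ℝ) - (k:ℝ) - 1 := by rw [hncast]; linarith
      have hprod2 : (2*(n:ℝ) - k - 1) * (8*((k:ℝ)+2)*F2)
          ≤ (2*(n:ℝ) - k - 1) * ((18*(n:ℝ) - 13*(k:ℝ) - 8) * F1) :=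
        mul_le_mul_of_nonneg_left h6 hc1
      have hcoef : (0:ℝ) ≤ (n:ℝ) - (k:ℝ) - 2 := by rw [hncast]; linarith
      -- key quadratic inequality
      have gkey : 8*((k:ℝ)+3)*(18*(n:ℝ) - 13*(k:ℝ) - 8)
          ≤ 5*((18*(n:ℝ) - 13*(k:ℝ) - 8)*((n:ℝ)-(k:ℝ)-2) + 8*((k:ℝ)+2)*(2*(n:ℝ)-(k:ℝ)-1)) := by
        have hfac : 5*((18*(n:ℝ) - 13*(k:ℝ) - 8)*((n:ℝ)-(k:ℝ)-2) + 8*((k:ℝ)+2)*(2*(n:ℝ)-(k:ℝ)-1))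
            - 8*((k:ℝ)+3)*(18*(n:ℝ) - 13*(k:ℝ) - 8)
            = ((2*(s:ℝ)-1) - ((k:ℝ)+2)) * (399*(s:ℝ) - 477 - 129*(k:ℝ))
              + (12*(s:ℝ)^2 - 405*(s:ℝ) + 105) := by
          rw [hncast]; ring
        have t1 : (0:ℝ) ≤ ((2*(s:ℝ)-1) - ((k:ℝ)+2)) * (399*(s:ℝ) - 477 - 129*(k:ℝ)) :=
          mul_nonneg (by linarith) (by linarith)
        have t2 : (0:ℝ) ≤ 12*(s:ℝ)^2 - 405*(s:ℝ) + 105 := by nlinarith [hsR]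
        linarith [hfac, t1, t2]
      have e1' : ((k:ℝ)+3) * F3 = ((n:ℝ)-(k:ℝ)-2)*F2 + (2*(n:ℝ)-(k:ℝ)-1)*F1 := by
        linarith [e1]
      have e1D : (18*(n:ℝ) - 13*(k:ℝ) - 8) * (((k:ℝ)+3) * F3)
          = (18*(n:ℝ) - 13*(k:ℝ) - 8) * (((n:ℝ)-(k:ℝ)-2)*F2)
            + (18*(n:ℝ) - 13*(k:ℝ) - 8) * ((2*(n:ℝ)-(k:ℝ)-1)*F1) := by
        rw [e1']; ring
      have hmain : (18*(n:ℝ) - 13*(k:ℝ) - 8) * (((k:ℝ)+3) * F3)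
          ≥ ((18*(n:ℝ) - 13*(k:ℝ) - 8)*((n:ℝ)-(k:ℝ)-2) + 8*((k:ℝ)+2)*(2*(n:ℝ)-(k:ℝ)-1)) * F2 := by
        linarith [e1D, hprod2]
      have gkeyF2 : 8*((k:ℝ)+3)*(18*(n:ℝ) - 13*(k:ℝ) - 8) * F2
          ≤ 5*((18*(n:ℝ) - 13*(k:ℝ) - 8)*((n:ℝ)-(k:ℝ)-2) + 8*((k:ℝ)+2)*(2*(n:ℝ)-(k:ℝ)-1)) * F2 :=
        mul_le_mul_of_nonneg_right gkey hF2
      have hfinal : ((k:ℝ)+3) * (18*(n:ℝ) - 13*(k:ℝ) - 8) * (8 * F2)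
          ≤ ((k:ℝ)+3) * (18*(n:ℝ) - 13*(k:ℝ) - 8) * (5 * F3) := by
        linarith [hmain, gkeyF2]
      have hpos : (0:ℝ) < ((k:ℝ)+3) * (18*(n:ℝ) - 13*(k:ℝ) - 8) := by positivity
      exact le_of_mul_le_mul_left (by linarith [hfinal]) hpos

lemma upper_ratio (s : ℕ) (hs : 100 ≤ s) :
    (coeff3 (3*s-2) (2*s-1) : ℝ) ≤ 2 * (coeff3 (3*s-2) (2*s-2) : ℝ) := by
  set n := 3*s-2 with hndef
  have hn1 : 1 ≤ n := by omega
  have hncast : (n : ℝ) = 3 * (s : ℝ) - 2 := by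
    rw [hndef]; push_cast [Nat.cast_sub (by omega : 2 ≤ 3 * s)]; ring
  have hsR : (100 : ℝ) ≤ (s : ℝ) := by exact_mod_cast hs
  set k := 2*s-3 with hkdef
  have hk1 : k + 1 = 2*s-2 := by omega
  have hk2 : k + 2 = 2*s-1 := by omega
  rw [← hk1, ← hk2]
  have hkcast : (k : ℝ) = 2 * (s:ℝ) - 3 := by
    rw [hkdef]; push_cast [Nat.cast_sub (by omega : 3 ≤ 2 * s)]; ring
  have IH2 : 8 * (coeff3 n k : ℝ) ≤ 5 * (coeff3 n (k+1) : ℝ) := ratio_lemma s hs k (by omega)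
  have e2 := coeff3_rec_real n k hn1
  set F0 := (coeff3 n k : ℝ); set F1 := (coeff3 n (k+1) : ℝ); set F2 := (coeff3 n (k+2) : ℝ)
  have hF1 : (0:ℝ) ≤ F1 := Nat.cast_nonneg _
  have hprod : (2*(n:ℝ) - k) * (8*F0) ≤ (2*(n:ℝ) - k) * (5*F1) :=
    mul_le_mul_of_nonneg_left IH2 (by rw [hncast, hkcast]; linarith)
  have h6 : 8*((k:ℝ)+2)*F2 ≤ (18*(n:ℝ) - 13*(k:ℝ) - 8) * F1 := by nlinarith [e2, hprod]
  have hpos : (0:ℝ) < 8*((k:ℝ)+2) := by positivity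
  have hgoal : 8*((k:ℝ)+2) * F2 ≤ 8*((k:ℝ)+2) * (2*F1) := by
    rw [hncast, hkcast] at h6
    rw [hkcast]
    nlinarith [h6, mul_nonneg (by linarith : (0:ℝ) ≤ 4*(s:ℝ)-11) hF1]
  exact le_of_mul_le_mul_left hgoal hpos

lemma sum_bound (s : ℕ) (hs : 100 ≤ s) :
    ∀ m, m ≤ 2*s → (∑ i ∈ range (m+1), (coeff3 (3*s-2) i : ℝ))
      ≤ (8/3) * (coeff3 (3*s-2) m : ℝ) := by
  intro m
  induction m with
  | zero =>
    intro _
    rw [Finset.sum_range_one]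
    have : (0:ℝ) ≤ (coeff3 (3*s-2) 0 : ℝ) := Nat.cast_nonneg _
    linarith
  | succ m ih =>
    intro hm
    rw [Finset.sum_range_succ]
    have h1 := ih (by omega)
    have h2 : 8 * (coeff3 (3*s-2) m : ℝ) ≤ 5 * (coeff3 (3*s-2) (m+1) : ℝ) :=
      ratio_lemma s hs m (by omega)
    linarith

lemma far_bound (s : ℕ) (hs : 100 ≤ s) (i : ℕ) (hi : i ≤ 2*s-5) :
    coeff3 (3*s-2) i ≤ coeff3 (3*s-2) (4*s-4-i) := by
  by_cases hc : i ≤ s-2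
  · have hsym := coeff3_symm (3*s-2) (4*s-4-i) (by omega)
    rw [show 2*(3*s-2) - (4*s-4-i) = 2*s+i by omega] at hsym
    rw [hsym]
    exact coeff3_mono' _ _ _ (by omega) (by omega)
  · exact coeff3_mono' _ _ _ (by omega) (by omega)

noncomputable def Fc (n i : ℕ) : ℝ := (coeff3 n i : ℝ)

lemma LPObj_eq (n : ℕ) (t : ℕ → ℝ) :
    LPObj n t = 3 * ∑ i ∈ Finset.range (2 * n + 1), Fc n i * t i := rfl

lemma Fc_nonneg (n i : ℕ) : 0 ≤ Fc n i := Nat.cast_nonneg _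

set_option maxHeartbeats 1000000 in
lemma optimality (s : ℕ) (hs : 100 ≤ s) (t : ℕ → ℝ) (ht : LPFeasible (3*s-2) t) :
    LPObj (3*s-2) (fun i => if i ≤ 2*s-4 then 1
      else if i = 2*s-3 then 3/4 else if i = 2*s-2 then 2/4
      else if i = 2*s-1 then 1/4 else 0) ≤ LPObj (3*s-2) t := by
  obtain ⟨ht0, htc⟩ := ht
  obtain ⟨p, hpdef⟩ : ∃ p, p = 2*s-4 := ⟨2*s-4, rfl⟩
  have hF0 : ∀ i, 0 ≤ Fc (3*s-2) i := fun i => Fc_nonneg _ i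
  have rat : ∀ i, i ≤ 2*s-1 → 8 * Fc (3*s-2) i ≤ 5 * Fc (3*s-2) (i+1) :=
    fun i hi => ratio_lemma s hs i hi
  -- objective value of the candidate optimal vector
  have hv : LPObj (3*s-2) (fun i => if i ≤ 2*s-4 then 1
      else if i = 2*s-3 then 3/4 else if i = 2*s-2 then 2/4
      else if i = 2*s-1 then 1/4 else 0)
      = 3*((∑ i ∈ range p, Fc (3*s-2) i) + Fc (3*s-2) p + (3/4)*Fc (3*s-2) (p+1)
          + (1/2)*Fc (3*s-2) (p+2) + (1/4)*Fc (3*s-2) (p+3)) := by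
    rw [LPObj_eq]
    have hshrink : ∑ i ∈ range (p+4), Fc (3*s-2) i * (if i ≤ 2*s-4 then (1:ℝ)
        else if i = 2*s-3 then 3/4 else if i = 2*s-2 then 2/4
        else if i = 2*s-1 then 1/4 else 0)
        = ∑ i ∈ range (2*(3*s-2)+1), Fc (3*s-2) i * (if i ≤ 2*s-4 then (1:ℝ)
        else if i = 2*s-3 then 3/4 else if i = 2*s-2 then 2/4
        else if i = 2*s-1 then 1/4 else 0) := by
      apply Finset.sum_subset (Finset.range_subset_range.mpr (by omega))
      intro x _ hx2
      have hxge : p + 4 ≤ x := by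
        simp only [Finset.mem_range, not_lt] at hx2; exact hx2
      rw [if_neg (by omega), if_neg (by omega), if_neg (by omega), if_neg (by omega), mul_zero]
    rw [← hshrink]
    rw [show p+4 = (p+3)+1 by omega, Finset.sum_range_succ,
      show p+3 = (p+2)+1 by omega, Finset.sum_range_succ,
      show p+2 = (p+1)+1 by omega, Finset.sum_range_succ,
      Finset.sum_range_succ]
    rw [show p+1+1 = p+2 by omega, show p+1+1+1 = p+3 by omega]
    rw [if_pos (by omega : p ≤ 2*s-4)]
    rw [if_neg (by omega : ¬ (p+1 ≤ 2*s-4)), if_pos (by omega : p+1 = 2*s-3)]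
    rw [if_neg (by omega : ¬ (p+2 ≤ 2*s-4)), if_neg (by omega : ¬ (p+2 = 2*s-3)),
      if_pos (by omega : p+2 = 2*s-2)]
    rw [if_neg (by omega : ¬ (p+3 ≤ 2*s-4)), if_neg (by omega : ¬ (p+3 = 2*s-3)),
      if_neg (by omega : ¬ (p+3 = 2*s-2)), if_pos (by omega : p+3 = 2*s-1)]
    have hone : ∑ i ∈ range p, Fc (3*s-2) i * (if i ≤ 2*s-4 then (1:ℝ)
        else if i = 2*s-3 then 3/4 else if i = 2*s-2 then 2/4
        else if i = 2*s-1 then 1/4 else 0) = ∑ i ∈ range p, Fc (3*s-2) i := by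
      apply Finset.sum_congr rfl
      intro i hi
      have : i < p := Finset.mem_range.mp hi
      rw [if_pos (by omega : i ≤ 2*s-4), mul_one]
    rw [hone]
    ring
  -- dual weights
  set c1 : ℝ := 3*Fc (3*s-2) p with hc1def
  set c2 : ℝ := 3*Fc (3*s-2) (p+1) with hc2def
  set c3 : ℝ := (3/2)*Fc (3*s-2) (p+2) + (3/4)*Fc (3*s-2) (p+1) - (3/4)*Fc (3*s-2) (p+3)
    with hc3def
  set c4 : ℝ := (3/2)*Fc (3*s-2) (p+3) - (3/2)*Fc (3*s-2) (p+1) with hc4def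
  have hc1 : 0 ≤ c1 := by rw [hc1def]; have := hF0 p; linarith
  have hc2 : 0 ≤ c2 := by rw [hc2def]; have := hF0 (p+1); linarith
  have hc3 : 0 ≤ c3 := by
    have hu : Fc (3*s-2) (2*s-1) ≤ 2 * Fc (3*s-2) (2*s-2) := upper_ratio s hs
    rw [show 2*s-1 = p+3 by omega, show 2*s-2 = p+2 by omega] at hu
    have := hF0 (p+1)
    rw [hc3def]
    linarith
  have hc4 : 0 ≤ c4 := by
    have r1 := rat (p+1) (by omega)
    have r2 := rat (p+2) (by omega)
    rw [show p+1+1 = p+2 by omega] at r1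
    rw [show p+2+1 = p+3 by omega] at r2
    have := hF0 (p+1)
    rw [hc4def]
    linarith
  -- constraints of the LP applied to our dual support
  have h1 : 1 ≤ t p + t (p+4) + t (p+4) := htc p (p+4) (p+4) (by omega)
  have h2 : 1 ≤ t (p+1) + t (p+3) + t (p+4) := htc (p+1) (p+3) (p+4) (by omega)
  have h3 : 1 ≤ t (p+2) + t (p+2) + t (p+4) := htc (p+2) (p+2) (p+4) (by omega)
  have h4 : 1 ≤ t (p+2) + t (p+3) + t (p+3) := htc (p+2) (p+3) (p+3) (by omega)
  have h5 : ∀ i ∈ range p, 1 ≤ t i + t (p+4) + t (2*p+4-i) := by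
    intro i hi
    have hip : i < p := Finset.mem_range.mp hi
    exact htc i (p+4) (2*p+4-i) (by omega)
  set W : ℝ := c1*(t p + t (p+4) + t (p+4)) + c2*(t (p+1) + t (p+3) + t (p+4))
        + c3*(t (p+2) + t (p+2) + t (p+4)) + c4*(t (p+2) + t (p+3) + t (p+3))
        + ∑ i ∈ range p, (3*Fc (3*s-2) i) * (t i + t (p+4) + t (2*p+4-i)) with hWdef
  -- step 1 : value ≤ weighted constraints
  have hVW : LPObj (3*s-2) (fun i => if i ≤ 2*s-4 then 1
      else if i = 2*s-3 then 3/4 else if i = 2*s-2 then 2/4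
      else if i = 2*s-1 then 1/4 else 0) ≤ W := by
    rw [hv, hWdef]
    have hs1 : c1 * 1 ≤ c1 * (t p + t (p+4) + t (p+4)) := mul_le_mul_of_nonneg_left h1 hc1
    have hs2 : c2 * 1 ≤ c2 * (t (p+1) + t (p+3) + t (p+4)) := mul_le_mul_of_nonneg_left h2 hc2
    have hs3 : c3 * 1 ≤ c3 * (t (p+2) + t (p+2) + t (p+4)) := mul_le_mul_of_nonneg_left h3 hc3
    have hs4 : c4 * 1 ≤ c4 * (t (p+2) + t (p+3) + t (p+3)) := mul_le_mul_of_nonneg_left h4 hc4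
    have hs5 : ∑ i ∈ range p, 3 * Fc (3*s-2) i
        ≤ ∑ i ∈ range p, (3*Fc (3*s-2) i) * (t i + t (p+4) + t (2*p+4-i)) := by
      apply Finset.sum_le_sum
      intro i hi
      have h := mul_le_mul_of_nonneg_left (h5 i hi)
        (by have := hF0 i; linarith : (0:ℝ) ≤ 3 * Fc (3*s-2) i)
      linarith
    have hsum3 : ∑ i ∈ range p, 3 * Fc (3*s-2) i = 3 * ∑ i ∈ range p, Fc (3*s-2) i := by
      rw [Finset.mul_sum]
    have hval : 3*((∑ i ∈ range p, Fc (3*s-2) i) + Fc (3*s-2) p + (3/4)*Fc (3*s-2) (p+1)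
          + (1/2)*Fc (3*s-2) (p+2) + (1/4)*Fc (3*s-2) (p+3))
        = c1 + c2 + c3 + c4 + 3 * ∑ i ∈ range p, Fc (3*s-2) i := by
      rw [hc1def, hc2def, hc3def, hc4def]; ring
    rw [hval]
    rw [hsum3] at hs5
    linarith
  -- key capacity inequality at node p+4
  have hKEY : 2*c1 + c2 + c3 + 3*(∑ i ∈ range p, Fc (3*s-2) i) ≤ 3*Fc (3*s-2) (p+4) := by
    obtain ⟨q, hq⟩ : ∃ q, p = q+1 := ⟨p-1, by omega⟩
    have hsb : ∑ i ∈ range (q+1), Fc (3*s-2) i ≤ (8/3) * Fc (3*s-2) q :=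
      sum_bound s hs q (by omega)
    rw [← hq] at hsb
    have r0 := rat q (by omega)
    rw [← hq] at r0
    have r1 := rat p (by omega)
    have r2 := rat (p+1) (by omega)
    have r3 := rat (p+2) (by omega)
    have r4 := rat (p+3) (by omega)
    rw [show p+1+1 = p+2 by omega] at r2
    rw [show p+2+1 = p+3 by omega] at r3
    rw [show p+3+1 = p+4 by omega] at r4
    have hf3 := hF0 (p+3)
    rw [hc1def, hc2def, hc3def]
    linarith
  -- step 2 : weighted constraints ≤ LPObj t
  have hWA : W ≤ LPObj (3*s-2) t := by
    rw [LPObj_eq, hWdef]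
    -- canonical sums
    have hsplit : ∑ i ∈ range (2*(3*s-2)+1), Fc (3*s-2) i * t i
        = ∑ i ∈ range (p+5), Fc (3*s-2) i * t i
          + ∑ i ∈ Finset.Ico (p+5) (2*(3*s-2)+1), Fc (3*s-2) i * t i := by
      rw [Finset.range_eq_Ico, ← Finset.sum_Ico_consecutive _ (by omega : 0 ≤ p+5)
        (by omega : p+5 ≤ 2*(3*s-2)+1), ← Finset.range_eq_Ico]
    have hpeel : ∑ i ∈ range (p+5), Fc (3*s-2) i * t i
        = ∑ i ∈ range p, Fc (3*s-2) i * t i + Fc (3*s-2) p * t p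
          + Fc (3*s-2) (p+1) * t (p+1) + Fc (3*s-2) (p+2) * t (p+2)
          + Fc (3*s-2) (p+3) * t (p+3) + Fc (3*s-2) (p+4) * t (p+4) := by
      rw [show p+5 = (p+4)+1 by omega, Finset.sum_range_succ,
        show p+4 = (p+3)+1 by omega, Finset.sum_range_succ,
        show p+3 = (p+2)+1 by omega, Finset.sum_range_succ,
        show p+2 = (p+1)+1 by omega, Finset.sum_range_succ,
        Finset.sum_range_succ]
    have hexp : ∑ i ∈ range p, (3*Fc (3*s-2) i) * (t i + t (p+4) + t (2*p+4-i))
        = 3*(∑ i ∈ range p, Fc (3*s-2) i * t i)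
          + (3*∑ i ∈ range p, Fc (3*s-2) i) * t (p+4)
          + 3*(∑ i ∈ range p, Fc (3*s-2) i * t (2*p+4-i)) := by
      rw [Finset.mul_sum, Finset.mul_sum, Finset.mul_sum, Finset.sum_mul,
        ← Finset.sum_add_distrib, ← Finset.sum_add_distrib]
      apply Finset.sum_congr rfl
      intro i _
      ring
    -- far tail
    have hfarA : ∑ i ∈ range p, Fc (3*s-2) i * t (2*p+4-i)
        ≤ ∑ i ∈ range p, Fc (3*s-2) (2*p+4-i) * t (2*p+4-i) := by
      apply Finset.sum_le_sum
      intro i hi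
      have hip : i < p := Finset.mem_range.mp hi
      have hfb : Fc (3*s-2) i ≤ Fc (3*s-2) (2*p+4-i) := by
        have h := far_bound s hs i (by omega)
        rw [show 4*s-4-i = 2*p+4-i by omega] at h
        simp only [Fc]
        exact_mod_cast h
      exact mul_le_mul_of_nonneg_right hfb (ht0 _ (by omega))
    have hfarB : ∑ i ∈ range p, Fc (3*s-2) (2*p+4-i) * t (2*p+4-i)
        ≤ ∑ j ∈ Finset.Ico (p+5) (2*(3*s-2)+1), Fc (3*s-2) j * t j := by
      have himg : ∑ i ∈ range p, Fc (3*s-2) (2*p+4-i) * t (2*p+4-i)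
          = ∑ j ∈ (range p).image (fun i => 2*p+4-i), Fc (3*s-2) j * t j := by
        rw [Finset.sum_image]
        intro x hx y hy hxy
        have hx' : x < p := Finset.mem_range.mp hx
        have hy' : y < p := Finset.mem_range.mp hy
        have hxy' : 2*p+4-x = 2*p+4-y := hxy
        omega
      rw [himg]
      apply Finset.sum_le_sum_of_subset_of_nonneg
      · intro j hj
        obtain ⟨i, hi, rfl⟩ := Finset.mem_image.mp hj
        have hip : i < p := Finset.mem_range.mp hi
        rw [Finset.mem_Ico]
        omega
      · intro j hj _
        apply mul_nonneg (hF0 j)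
        apply ht0
        have := (Finset.mem_Ico.mp hj).2
        omega
    have hLt : (2*c1 + c2 + c3 + 3*(∑ i ∈ range p, Fc (3*s-2) i)) * t (p+4)
        ≤ (3*Fc (3*s-2) (p+4)) * t (p+4) :=
      mul_le_mul_of_nonneg_right hKEY (ht0 _ (by omega))
    rw [hsplit, hpeel, hexp]
    rw [hc1def, hc2def, hc3def] at hLt
    rw [hc1def, hc2def, hc3def, hc4def]
    linarith [hfarA, hfarB, hLt]
  exact le_trans hVW hWA

lemma feasibility (s : ℕ) (hs : 100 ≤ s) :
    LPFeasible (3*s-2) (fun i => if i ≤ 2*s-4 then 1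
      else if i = 2*s-3 then 3/4 else if i = 2*s-2 then 2/4
      else if i = 2*s-1 then 1/4 else 0) := by
  set v : ℕ → ℝ := fun i => if i ≤ 2*s-4 then 1
      else if i = 2*s-3 then 3/4 else if i = 2*s-2 then 2/4
      else if i = 2*s-1 then 1/4 else 0 with hvdef
  have hv0 : ∀ x : ℕ, 0 ≤ v x := by
    intro x; simp only [hvdef]; split_ifs <;> norm_num
  have hv1 : ∀ x : ℕ, x ≤ 2*s-4 → v x = 1 := by
    intro x hx; simp only [hvdef]; rw [if_pos hx]
  have hvq : ∀ x : ℕ, 2*s-3 ≤ x → (2*(s:ℝ) - x)/4 ≤ v x := by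
    intro x hx
    by_cases hx1 : x = 2*s-3
    · have hxR : (x:ℝ) = 2*(s:ℝ) - 3 := by
        subst hx1; push_cast [Nat.cast_sub (by omega : 3 ≤ 2*s)]; ring
      simp only [hvdef]
      rw [if_neg (by omega), if_pos hx1, hxR]
      norm_num
    · by_cases hx2 : x = 2*s-2
      · have hxR : (x:ℝ) = 2*(s:ℝ) - 2 := by
          subst hx2; push_cast [Nat.cast_sub (by omega : 2 ≤ 2*s)]; ring
        simp only [hvdef]
        rw [if_neg (by omega), if_neg hx1, if_pos hx2, hxR]
        norm_num
      · by_cases hx3 : x = 2*s-1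
        · have hxR : (x:ℝ) = 2*(s:ℝ) - 1 := by
            subst hx3; push_cast [Nat.cast_sub (by omega : 1 ≤ 2*s)]; ring
          simp only [hvdef]
          rw [if_neg (by omega), if_neg hx1, if_neg hx2, if_pos hx3, hxR]
          norm_num
        · have hxge : 2*s ≤ x := by omega
          have hxR : 2*(s:ℝ) ≤ (x:ℝ) := by exact_mod_cast hxge
          simp only [hvdef]
          rw [if_neg (by omega), if_neg hx1, if_neg hx2, if_neg hx3]
          have : (0:ℝ) ≤ (x:ℝ) - 2*(s:ℝ) := by linarith
          linarith
  constructor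
  · intro i _; exact hv0 i
  · intro i j k hijk
    by_cases hi : i ≤ 2*s-4
    · have := hv1 i hi; have := hv0 j; have := hv0 k; linarith
    · by_cases hj : j ≤ 2*s-4
      · have := hv1 j hj; have := hv0 i; have := hv0 k; linarith
      · by_cases hk : k ≤ 2*s-4
        · have := hv1 k hk; have := hv0 i; have := hv0 j; linarith
        · have hq1 := hvq i (by omega)
          have hq2 := hvq j (by omega)
          have hq3 := hvq k (by omega)
          have hcast : (i:ℝ) + (j:ℝ) + (k:ℝ) ≤ 6*(s:ℝ) - 4 := by
            have h := (Nat.cast_le (α := ℝ)).mpr hijk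
            push_cast [Nat.cast_sub (by omega : 2 ≤ 3*s)] at h
            linarith
          linarith

/-- For `n = 3s - 2` with `s` large, the vector with `tᵢ = 1` for `i ≤ 2s-4`,
`t_{2s-3} = 3/4`, `t_{2s-2} = 2/4`, `t_{2s-1} = 1/4` and `tᵢ = 0` for `i ≥ 2s`
is an optimal solution of the cap set linear program. -/
theorem lp_optimal_three_s_sub_two :
    ∃ S : ℕ, ∀ s : ℕ, S ≤ s →
      LPFeasible (3 * s - 2) (fun i => if i ≤ 2 * s - 4 then 1
        else if i = 2 * s - 3 then 3 / 4 else if i = 2 * s - 2 then 2 / 4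
        else if i = 2 * s - 1 then 1 / 4 else 0) ∧
      ∀ t : ℕ → ℝ, LPFeasible (3 * s - 2) t →
        LPObj (3 * s - 2) (fun i => if i ≤ 2 * s - 4 then 1
          else if i = 2 * s - 3 then 3 / 4 else if i = 2 * s - 2 then 2 / 4
          else if i = 2 * s - 1 then 1 / 4 else 0) ≤
        LPObj (3 * s - 2) t := by
  refine ⟨100, fun s hs => ⟨feasibility s hs, fun t ht => optimality s hs t ht⟩⟩
end
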